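/- arXiv:2508.03136 — 2 statements merged into one kernel-verified Lean document; each statement's English description precedes it below -/
import Mathlib

section
/- Under Assumption 1, for any stationary policy π : S → Δ(A), the robust average-reward Bellman equation is solvable: there exist a constant g ∈ ℝ and a vector h : S → ℝ such that h(s) = ∑_a π(a|s) ( r(s,a) − g + σ_{𝒫^a_s}(h) ) for every s ∈ S, and moreover g^π_𝒫(s) = g for every s ∈ S (the robust average reward of π is the constant g). -/
open scoped BigOperators
open Matrix Filter

/-- Support function `σ_Q(V) = min_{p ∈ Q} ∑_{s'} p(s') V(s')` (as an infimum,
which is attained when `Q` is nonempty and compact). -/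
noncomputable def suppF {S : Type*} [Fintype S] (Q : Set (S → ℝ)) (V : S → ℝ) : ℝ :=
  sInf ((fun p => ∑ s', p s' * V s') '' Q)

/-- The stochastic matrix `P^π` induced by a stationary policy `π` and a kernel `P`. -/
noncomputable def polMat {S A : Type*} [Fintype S] [Fintype A]
    (π : S → A → ℝ) (P : S → A → S → ℝ) : Matrix S S ℝ :=
  Matrix.of fun s s' => ∑ a, π s a * P s a s'

/-- The reward vector `r^π`. -/
noncomputable def polRew {S A : Type*} [Fintype A]
    (π : S → A → ℝ) (r : S → A → ℝ) : S → ℝ :=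
  fun s => ∑ a, π s a * r s a

/-- The average reward `g^π_P(s) = liminf_n (1/n) ∑_{t<n} ((P^π)^t r^π)(s)`. -/
noncomputable def avgR {S A : Type*} [Fintype S] [DecidableEq S] [Fintype A]
    (π : S → A → ℝ) (P : S → A → S → ℝ) (r : S → A → ℝ) (s : S) : ℝ :=
  Filter.liminf
    (fun n : ℕ => (∑ t ∈ Finset.range n, ((polMat π P ^ t) *ᵥ polRew π r) s) / n)
    Filter.atTop

/-- The robust average reward `g^π_U(s) = inf_{P ∈ U} g^π_P(s)`. -/
noncomputable def robAvgR {S A : Type*} [Fintype S] [DecidableEq S] [Fintype A]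
    (U : S → A → Set (S → ℝ)) (π : S → A → ℝ) (r : S → A → ℝ) (s : S) : ℝ :=
  sInf {x | ∃ P : S → A → S → ℝ, (∀ s' a, P s' a ∈ U s' a) ∧ x = avgR π P r s}

/-- A stochastic matrix is irreducible: all states communicate. -/
def IrredM {S : Type*} [Fintype S] [DecidableEq S] (M : Matrix S S ℝ) : Prop :=
  ∀ s s' : S, ∃ k : ℕ, 1 ≤ k ∧ 0 < (M ^ k) s s'

/-- Assumption 1: for every deterministic policy `d` and every kernel `P ∈ U`,
the matrix `P^d` is irreducible. -/
def Assump1 {S A : Type*} [Fintype S] [DecidableEq S]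
    (U : S → A → Set (S → ℝ)) : Prop :=
  ∀ (d : S → A) (P : S → A → S → ℝ), (∀ s a, P s a ∈ U s a) →
    IrredM (Matrix.of fun s s' => P s (d s) s')

set_option linter.unusedSectionVars false

section
variable {S : Type*} [Fintype S]

lemma dot_le_of_le {p V : S → ℝ} (h0 : ∀ s, 0 ≤ p s) (h1 : ∑ s, p s = 1)
    {b : ℝ} (hV : ∀ s, V s ≤ b) : ∑ s, p s * V s ≤ b := by
  calc ∑ s, p s * V s ≤ ∑ s, p s * b :=
        Finset.sum_le_sum fun s _ => mul_le_mul_of_nonneg_left (hV s) (h0 s)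
    _ = b := by rw [← Finset.sum_mul, h1, one_mul]

lemma le_dot_of_le {p V : S → ℝ} (h0 : ∀ s, 0 ≤ p s) (h1 : ∑ s, p s = 1)
    {b : ℝ} (hV : ∀ s, b ≤ V s) : b ≤ ∑ s, p s * V s := by
  calc b = ∑ s, p s * b := by rw [← Finset.sum_mul, h1, one_mul]
    _ ≤ ∑ s, p s * V s :=
        Finset.sum_le_sum fun s _ => mul_le_mul_of_nonneg_left (hV s) (h0 s)

lemma suppF_spec {Q : Set (S → ℝ)} (hne : Q.Nonempty) (hc : IsCompact Q) (V : S → ℝ) :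
    ∃ p ∈ Q, suppF Q V = ∑ s', p s' * V s' ∧
      ∀ q ∈ Q, ∑ s', p s' * V s' ≤ ∑ s', q s' * V s' := by
  have hcont : Continuous fun p : S → ℝ => ∑ s', p s' * V s' :=
    continuous_finset_sum _ fun s' _ => (continuous_apply s').mul continuous_const
  obtain ⟨p, hp, hmin⟩ := hc.exists_isMinOn hne hcont.continuousOn
  refine ⟨p, hp, ?_, fun q hq => hmin hq⟩
  apply le_antisymm
  · refine csInf_le ⟨∑ s', p s' * V s', ?_⟩ ⟨p, hp, rfl⟩
    rintro x ⟨q, hq, rfl⟩; exact hmin hq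
  · exact le_csInf ⟨_, p, hp, rfl⟩ (by rintro x ⟨q, hq, rfl⟩; exact hmin hq)

lemma suppF_le {Q : Set (S → ℝ)} (hne : Q.Nonempty) (hc : IsCompact Q) (V : S → ℝ)
    {q : S → ℝ} (hq : q ∈ Q) : suppF Q V ≤ ∑ s', q s' * V s' := by
  obtain ⟨p, hp, heq, hmin⟩ := suppF_spec hne hc V
  exact heq ▸ hmin q hq

lemma suppF_le_of_le {Q : Set (S → ℝ)} (hne : Q.Nonempty) (hc : IsCompact Q)
    (hs : Q ⊆ stdSimplex ℝ S) {V : S → ℝ} {b : ℝ} (hV : ∀ s, V s ≤ b) :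
    suppF Q V ≤ b := by
  obtain ⟨p, hp, heq, _⟩ := suppF_spec hne hc V
  rw [heq]; exact dot_le_of_le (hs hp).1 (hs hp).2 hV

lemma le_suppF_of_le {Q : Set (S → ℝ)} (hne : Q.Nonempty) (hc : IsCompact Q)
    (hs : Q ⊆ stdSimplex ℝ S) {V : S → ℝ} {b : ℝ} (hV : ∀ s, b ≤ V s) :
    b ≤ suppF Q V := by
  obtain ⟨p, hp, heq, _⟩ := suppF_spec hne hc V
  rw [heq]; exact le_dot_of_le (hs hp).1 (hs hp).2 hV

lemma suppF_lipschitz' {Q : Set (S → ℝ)} (hne : Q.Nonempty) (hc : IsCompact Q)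
    (hs : Q ⊆ stdSimplex ℝ S) (V W : S → ℝ) :
    suppF Q V ≤ suppF Q W + dist V W := by
  obtain ⟨p, hp, heq, _⟩ := suppF_spec hne hc W
  have h1 : suppF Q V ≤ ∑ s', p s' * V s' := suppF_le hne hc V hp
  have h2 : ∑ s', p s' * V s' ≤ ∑ s', p s' * W s' + dist V W := by
    have : ∑ s', p s' * V s' - ∑ s', p s' * W s' = ∑ s', p s' * (V s' - W s') := by
      rw [← Finset.sum_sub_distrib]; congr 1; ext s'; ring
    have hb : ∀ s', V s' - W s' ≤ dist V W := fun s' => by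
      have := dist_le_pi_dist V W s'
      rw [Real.dist_eq] at this
      linarith [le_abs_self (V s' - W s'), this]
    have := dot_le_of_le (hs hp).1 (hs hp).2 hb
    linarith [this, this]
  linarith [heq ▸ (h1.trans h2)]

lemma suppF_lipschitz {Q : Set (S → ℝ)} (hne : Q.Nonempty) (hc : IsCompact Q)
    (hs : Q ⊆ stdSimplex ℝ S) : LipschitzWith 1 (fun V => suppF Q V) := by
  apply LipschitzWith.of_dist_le_mul
  intro V W
  rw [NNReal.coe_one, one_mul, Real.dist_eq, abs_le]
  constructor
  · have := suppF_lipschitz' hne hc hs W V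
    rw [dist_comm] at this; linarith
  · have := suppF_lipschitz' hne hc hs V W
    linarith

lemma suppF_add_const {Q : Set (S → ℝ)} (hne : Q.Nonempty) (hc : IsCompact Q)
    (hs : Q ⊆ stdSimplex ℝ S) (V : S → ℝ) (m : ℝ) :
    suppF Q (fun s => V s + m) = suppF Q V + m := by
  have key : ∀ q ∈ Q, ∑ s', q s' * (V s' + m) = (∑ s', q s' * V s') + m := by
    intro q hq
    have h1 : (∑ s', q s') = 1 := (hs hq).2
    calc ∑ s', q s' * (V s' + m) = (∑ s', q s' * V s') + (∑ s', q s') * m := by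
          rw [Finset.sum_mul, ← Finset.sum_add_distrib]; congr 1; ext s'; ring
      _ = (∑ s', q s' * V s') + m := by rw [h1, one_mul]
  obtain ⟨p, hp, heq, hmin⟩ := suppF_spec hne hc (fun s => V s + m)
  obtain ⟨p', hp', heq', hmin'⟩ := suppF_spec hne hc V
  rw [heq, heq']
  have h1 := hmin p' hp'
  have h2 := hmin' p hp
  rw [key p hp, key p' hp'] at *
  linarith

end

section
variable {S A : Type*} [Fintype S] [DecidableEq S] [Nonempty S] [Fintype A] [Nonempty A]
variable {r : S → A → ℝ} {U : S → A → Set (S → ℝ)} {π : S → A → ℝ}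

/-- Existence of the robust discounted value function. -/
lemma disc_fixed
    (hU : ∀ s a, (U s a).Nonempty ∧ IsCompact (U s a) ∧ Convex ℝ (U s a) ∧
      U s a ⊆ stdSimplex ℝ S)
    (hπ : ∀ s, π s ∈ stdSimplex ℝ A)
    {γ : ℝ} (hγ0 : 0 ≤ γ) (hγ1 : γ < 1) :
    ∃ V : S → ℝ, ∀ s, V s = ∑ a, π s a * (r s a + γ * suppF (U s a) V) := by
  set T : (S → ℝ) → (S → ℝ) :=
    fun V s => ∑ a, π s a * (r s a + γ * suppF (U s a) V) with hT
  have hlip : ∀ V W : S → ℝ, dist (T V) (T W) ≤ γ * dist V W := by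
    intro V W
    rw [dist_pi_le_iff (by positivity)]
    intro s
    rw [Real.dist_eq]
    have hterm : ∀ a, |π s a * (r s a + γ * suppF (U s a) V)
        - π s a * (r s a + γ * suppF (U s a) W)| ≤ π s a * (γ * dist V W) := by
      intro a
      have h1 : π s a * (r s a + γ * suppF (U s a) V)
          - π s a * (r s a + γ * suppF (U s a) W)
          = π s a * γ * (suppF (U s a) V - suppF (U s a) W) := by ring
      rw [h1, abs_mul, abs_of_nonneg (mul_nonneg ((hπ s).1 a) hγ0)]
      have hd : |suppF (U s a) V - suppF (U s a) W| ≤ dist V W := by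
        have := (suppF_lipschitz (hU s a).1 (hU s a).2.1 (hU s a).2.2.2).dist_le_mul V W
        rw [NNReal.coe_one, one_mul, Real.dist_eq] at this
        exact this
      calc π s a * γ * |suppF (U s a) V - suppF (U s a) W|
          ≤ π s a * γ * dist V W := by
            exact mul_le_mul_of_nonneg_left hd (mul_nonneg ((hπ s).1 a) hγ0)
        _ = π s a * (γ * dist V W) := by ring
    calc |T V s - T W s| = |∑ a, (π s a * (r s a + γ * suppF (U s a) V)
          - π s a * (r s a + γ * suppF (U s a) W))| := by
          rw [hT]; simp only []; rw [← Finset.sum_sub_distrib]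
      _ ≤ ∑ a, |π s a * (r s a + γ * suppF (U s a) V)
          - π s a * (r s a + γ * suppF (U s a) W)| := Finset.abs_sum_le_sum_abs _ _
      _ ≤ ∑ a, π s a * (γ * dist V W) := Finset.sum_le_sum fun a _ => hterm a
      _ = γ * dist V W := by rw [← Finset.sum_mul, (hπ s).2, one_mul]
  have hcontr : ContractingWith ⟨γ, hγ0⟩ T := by
    constructor
    · exact_mod_cast hγ1
    · exact LipschitzWith.of_dist_le_mul fun x y => hlip x y
  exact ⟨hcontr.fixedPoint T, fun s => congrFun hcontr.fixedPoint_isFixedPt.symm s⟩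

/-- Bounds for a fixed point of the discounted operator. -/
lemma disc_bounds
    (hr : ∀ s a, r s a ∈ Set.Icc (0 : ℝ) 1)
    (hU : ∀ s a, (U s a).Nonempty ∧ IsCompact (U s a) ∧ Convex ℝ (U s a) ∧
      U s a ⊆ stdSimplex ℝ S)
    (hπ : ∀ s, π s ∈ stdSimplex ℝ A)
    {γ : ℝ} (hγ0 : 0 ≤ γ) (hγ1 : γ < 1)
    {V : S → ℝ} (hV : ∀ s, V s = ∑ a, π s a * (r s a + γ * suppF (U s a) V)) :
    (∀ s, 0 ≤ V s) ∧ (∀ s, V s ≤ (1 - γ)⁻¹) := by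
  obtain ⟨s0, _, hs0⟩ := Finset.exists_min_image Finset.univ V Finset.univ_nonempty
  obtain ⟨s1, _, hs1⟩ := Finset.exists_max_image Finset.univ V Finset.univ_nonempty
  have hmin : ∀ s, V s0 ≤ V s := fun s => hs0 s (Finset.mem_univ s)
  have hmax : ∀ s, V s ≤ V s1 := fun s => hs1 s (Finset.mem_univ s)
  have hlow : γ * V s0 ≤ V s0 := by
    conv_rhs => rw [hV s0]
    calc γ * V s0 = ∑ a, π s0 a * (γ * V s0) := by
          rw [← Finset.sum_mul, (hπ s0).2, one_mul]
      _ ≤ ∑ a, π s0 a * (r s0 a + γ * suppF (U s0 a) V) := by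
          apply Finset.sum_le_sum
          intro a _
          apply mul_le_mul_of_nonneg_left _ ((hπ s0).1 a)
          have h1 : V s0 ≤ suppF (U s0 a) V :=
            le_suppF_of_le (hU s0 a).1 (hU s0 a).2.1 (hU s0 a).2.2.2 hmin
          have := (hr s0 a).1
          nlinarith
  have h0 : 0 ≤ V s0 := by nlinarith
  have hup : V s1 ≤ 1 + γ * V s1 := by
    conv_lhs => rw [hV s1]
    calc ∑ a, π s1 a * (r s1 a + γ * suppF (U s1 a) V)
        ≤ ∑ a, π s1 a * (1 + γ * V s1) := by
          apply Finset.sum_le_sum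
          intro a _
          apply mul_le_mul_of_nonneg_left _ ((hπ s1).1 a)
          have h1 : suppF (U s1 a) V ≤ V s1 :=
            suppF_le_of_le (hU s1 a).1 (hU s1 a).2.1 (hU s1 a).2.2.2 hmax
          have := (hr s1 a).2
          nlinarith
      _ = 1 + γ * V s1 := by rw [← Finset.sum_mul, (hπ s1).2, one_mul]
  have h1 : V s1 ≤ (1 - γ)⁻¹ := by
    rw [inv_eq_one_div, le_div_iff₀ (by linarith)]; linarith
  exact ⟨fun s => h0.trans (hmin s), fun s => (hmax s).trans h1⟩

end


section mat
variable {S : Type*} [Fintype S] [DecidableEq S] [Nonempty S]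

lemma pow_nonneg_entries {M : Matrix S S ℝ} (h : ∀ s s', 0 ≤ M s s') :
    ∀ k s s', 0 ≤ (M ^ k) s s' := by
  intro k
  induction k with
  | zero => intro s s'; rw [pow_zero, Matrix.one_apply]; positivity
  | succ k ih =>
    intro s s'
    rw [pow_succ, Matrix.mul_apply]
    exact Finset.sum_nonneg fun j _ => mul_nonneg (ih s j) (h j s')

lemma pow_row_sum {M : Matrix S S ℝ} (h : ∀ s, ∑ s', M s s' = 1) :
    ∀ k s, ∑ s', (M ^ k) s s' = 1 := by
  intro k
  induction k with
  | zero => intro s; simp [Matrix.one_apply]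
  | succ k ih =>
    intro s
    simp only [pow_succ, Matrix.mul_apply]
    rw [Finset.sum_comm]
    calc ∑ j, ∑ s', (M ^ k) s j * M j s' = ∑ j, (M ^ k) s j * ∑ s', M j s' := by
          congr 1; ext j; rw [Finset.mul_sum]
      _ = 1 := by simp only [h, mul_one]; exact ih s

/-- A stochastic irreducible matrix connects any two states within `card S` steps. -/
lemma irred_within_card {M : Matrix S S ℝ} (hnn : ∀ s s', 0 ≤ M s s')
    (hrow : ∀ s, ∑ s', M s s' = 1) (hirr : IrredM M) (s s' : S) :
    ∃ k, 1 ≤ k ∧ k ≤ Fintype.card S ∧ 0 < (M ^ k) s s' := by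
  classical
  set n := Fintype.card S with hn
  set R : ℕ → Finset S :=
    fun j => Finset.univ.filter (fun t => ∃ i, 1 ≤ i ∧ i ≤ j ∧ 0 < (M ^ i) s t) with hR
  have hmemR : ∀ j t, t ∈ R j ↔ ∃ i, 1 ≤ i ∧ i ≤ j ∧ 0 < (M ^ i) s t := by
    intro j t; simp [hR]
  have hmono : ∀ {j j'}, j ≤ j' → R j ⊆ R j' := by
    intro j j' hjj t ht
    rw [hmemR] at ht ⊢
    obtain ⟨i, h1, h2, h3⟩ := ht
    exact ⟨i, h1, h2.trans hjj, h3⟩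
  have hstep : ∀ j t u, t ∈ R j → 0 < M t u → u ∈ R (j + 1) := by
    intro j t u ht hM
    rw [hmemR] at ht ⊢
    obtain ⟨i, h1, h2, h3⟩ := ht
    refine ⟨i + 1, le_add_right h1, by omega, ?_⟩
    rw [pow_succ, Matrix.mul_apply]
    have : 0 < (M ^ i) s t * M t u := mul_pos h3 hM
    calc (0:ℝ) < (M ^ i) s t * M t u := this
      _ ≤ ∑ j, (M ^ i) s j * M j u :=
        Finset.single_le_sum (fun j _ => mul_nonneg (pow_nonneg_entries hnn i s j) (hnn j u))
          (Finset.mem_univ t)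
  have hdecomp : ∀ (i : ℕ) (u : S), 0 < (M ^ (i + 1)) s u →
      ∃ t, 0 < (M ^ i) s t ∧ 0 < M t u := by
    intro i u hpos
    rw [pow_succ, Matrix.mul_apply] at hpos
    by_contra hcon
    push_neg at hcon
    have : ∑ j, (M ^ i) s j * M j u ≤ 0 := by
      apply Finset.sum_nonpos
      intro j _
      rcases lt_or_ge 0 ((M ^ i) s j) with h | h
      · have := hcon j h
        have h2 : M j u = 0 := le_antisymm (le_of_not_gt (fun hh => absurd hh (by
            intro hh'; exact absurd hh' (not_lt.mpr (hcon j h))))) (hnn j u)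
        rw [h2, mul_zero]
      · have h2 : (M ^ i) s j = 0 := le_antisymm h (pow_nonneg_entries hnn i s j)
        rw [h2, zero_mul]
    linarith
  have hR1 : (R 1).Nonempty := by
    have : (0:ℝ) < ∑ s', M s s' := by rw [hrow s]; norm_num
    have h0 : ∑ s' : S, (0:ℝ) < ∑ s', M s s' := by simpa using this
    obtain ⟨t, _, ht⟩ := Finset.exists_lt_of_sum_lt h0
    exact ⟨t, (hmemR 1 t).2 ⟨1, le_refl 1, le_refl 1, by rwa [pow_one]⟩⟩
  -- there is a stabilization index j₀ ≤ n
  have hstab : ∃ j₀, 1 ≤ j₀ ∧ j₀ ≤ n ∧ R j₀ = R (j₀ + 1) := by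
    by_contra hcon
    push_neg at hcon
    have hgrow : ∀ j, 1 ≤ j → j ≤ n + 1 → j ≤ (R j).card := by
      intro j
      induction j with
      | zero => omega
      | succ j ih =>
        intro _ hj
        rcases Nat.eq_zero_or_pos j with h | h
        · subst h; exact hR1.card_pos
        · have hj1 : 1 ≤ j := h
          have hcard := ih hj1 (by omega)
          have hss : R j ⊂ R (j + 1) :=
            lt_of_le_of_ne (hmono (Nat.le_succ j)) (hcon j hj1 (by omega))
          have := Finset.card_lt_card hss
          omega
    have := hgrow (n + 1) (by omega) (le_refl _)
    have hle : (R (n+1)).card ≤ n := by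
      have := Finset.card_le_univ (R (n + 1))
      rwa [hn]
    omega
  obtain ⟨j₀, hj₀1, hj₀n, hj₀⟩ := hstab
  -- R j₀ is closed under one more transition step
  have hclosed : ∀ t u, t ∈ R j₀ → 0 < M t u → u ∈ R j₀ := by
    intro t u ht hM
    rw [hj₀]
    exact hstep j₀ t u ht hM
  -- every reachable state is in R j₀
  have hall : ∀ i, 1 ≤ i → ∀ u, 0 < (M ^ i) s u → u ∈ R j₀ := by
    intro i
    induction i using Nat.strong_induction_on with
    | _ i ih =>
      intro hi u hu
      rcases le_or_gt i j₀ with h | h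
      · exact (hmemR j₀ u).2 ⟨i, hi, h, hu⟩
      · obtain ⟨i', rfl⟩ : ∃ i', i = i' + 1 := ⟨i - 1, by omega⟩
        obtain ⟨t, ht1, ht2⟩ := hdecomp i' u hu
        have hi' : 1 ≤ i' := by omega
        exact hclosed t u (ih i' (by omega) hi' t ht1) ht2
  obtain ⟨k, hk1, hkpos⟩ := hirr s s'
  have hs' : s' ∈ R j₀ := hall k hk1 s' hkpos
  have hs'' : s' ∈ R n := hmono hj₀n hs'
  rw [hmemR] at hs''
  obtain ⟨i, h1, h2, h3⟩ := hs''
  exact ⟨i, h1, h2, h3⟩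

lemma pow_entry_ge {M B : Matrix S S ℝ} {c : ℝ} (hc : 0 ≤ c)
    (hB : ∀ s s', 0 ≤ B s s') (hle : ∀ s s', c * B s s' ≤ M s s') :
    ∀ k s s', c ^ k * (B ^ k) s s' ≤ (M ^ k) s s' := by
  intro k
  induction k with
  | zero => intro s s'; simp
  | succ k ih =>
    intro s s'
    simp only [pow_succ, Matrix.mul_apply, Finset.mul_sum]
    apply Finset.sum_le_sum
    intro j _
    have h1 : 0 ≤ (B ^ k) s j := pow_nonneg_entries hB k s j
    have h2 := ih s j
    have h3 := hle j s'
    have h4 := hB j s'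
    calc c ^ (k + 1) * ((B ^ k) s j * B j s') = (c ^ k * (B ^ k) s j) * (c * B j s') := by ring
      _ ≤ (M ^ k) s j * M j s' := by
        apply mul_le_mul h2 h3 (by positivity) ((by positivity : (0:ℝ) ≤ c ^ k * (B ^ k) s j).trans h2)

lemma mulVec_apply' (M : Matrix S S ℝ) (v : S → ℝ) (s : S) :
    (M *ᵥ v) s = ∑ s', M s s' * v s' := by
  simp [Matrix.mulVec, dotProduct]

lemma mulVec_le_of_le {M : Matrix S S ℝ} (hnn : ∀ s s', 0 ≤ M s s')
    (hrow : ∀ s, ∑ s', M s s' = 1) {v : S → ℝ} {b : ℝ} (hv : ∀ s, v s ≤ b) (s : S) :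
    (M *ᵥ v) s ≤ b := by
  rw [mulVec_apply']
  exact dot_le_of_le (fun s' => hnn s s') (hrow s) hv

lemma le_mulVec_of_le {M : Matrix S S ℝ} (hnn : ∀ s s', 0 ≤ M s s')
    (hrow : ∀ s, ∑ s', M s s' = 1) {v : S → ℝ} {b : ℝ} (hv : ∀ s, b ≤ v s) (s : S) :
    b ≤ (M *ᵥ v) s := by
  rw [mulVec_apply']
  exact le_dot_of_le (fun s' => hnn s s') (hrow s) hv

lemma mulVec_mono {M : Matrix S S ℝ} (hnn : ∀ s s', 0 ≤ M s s')
    {v w : S → ℝ} (hv : ∀ s, v s ≤ w s) (s : S) : (M *ᵥ v) s ≤ (M *ᵥ w) s := by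
  rw [mulVec_apply', mulVec_apply']
  exact Finset.sum_le_sum fun s' _ => mul_le_mul_of_nonneg_left (hv s') (hnn s s')

lemma telescope_step {M : Matrix S S ℝ} (hnn : ∀ s s', 0 ≤ M s s')
    (hrow : ∀ s, ∑ s', M s s' = 1) (g : ℝ) (h : S → ℝ) (t : ℕ) (s : S) :
    ((M ^ t) *ᵥ (fun s' => g + h s' - (M *ᵥ h) s')) s
      = g + ((M ^ t) *ᵥ h) s - ((M ^ (t + 1)) *ᵥ h) s := by
  have h1 : ((M ^ t) *ᵥ (fun _ => g)) s = g := by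
    rw [mulVec_apply']
    simp only [← Finset.sum_mul]
    rw [pow_row_sum hrow t s, one_mul]
  have h2 : (M ^ t) *ᵥ (M *ᵥ h) = (M ^ (t + 1)) *ᵥ h := by
    rw [Matrix.mulVec_mulVec, ← pow_succ]
  have h3 : (fun s' => g + h s' - (M *ᵥ h) s') = (fun _ => g) + h - (M *ᵥ h) := rfl
  rw [h3, Matrix.mulVec_sub, Matrix.mulVec_add, ← h2]
  simp only [Pi.sub_apply, Pi.add_apply]
  rw [h1]

lemma telescope_sum {M : Matrix S S ℝ} (hnn : ∀ s s', 0 ≤ M s s')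
    (hrow : ∀ s, ∑ s', M s s' = 1) (g : ℝ) (h : S → ℝ) (N : ℕ) (s : S) :
    ∑ t ∈ Finset.range N, ((M ^ t) *ᵥ (fun s' => g + h s' - (M *ᵥ h) s')) s
      = N * g + h s - ((M ^ N) *ᵥ h) s := by
  have : ∀ t ∈ Finset.range N, ((M ^ t) *ᵥ (fun s' => g + h s' - (M *ᵥ h) s')) s
      = g + (((M ^ t) *ᵥ h) s - ((M ^ (t + 1)) *ᵥ h) s) := by
    intro t _
    rw [telescope_step hnn hrow]; ring
  rw [Finset.sum_congr rfl this, Finset.sum_add_distrib, Finset.sum_const, Finset.card_range,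
    Finset.sum_range_sub' (fun t => ((M ^ t) *ᵥ h) s) N]
  simp only [pow_zero, Matrix.one_mulVec]
  ring

end mat

section pol
variable {S A : Type*} [Fintype S] [DecidableEq S] [Nonempty S] [Fintype A] [Nonempty A]
variable {r : S → A → ℝ} {U : S → A → Set (S → ℝ)} {π : S → A → ℝ}

lemma polMat_nonneg (hπ : ∀ s, π s ∈ stdSimplex ℝ A)
    {P : S → A → S → ℝ} (hP : ∀ s a, P s a ∈ stdSimplex ℝ S) :
    ∀ s s', 0 ≤ polMat π P s s' := by
  intro s s'
  exact Finset.sum_nonneg fun a _ => mul_nonneg ((hπ s).1 a) ((hP s a).1 s')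

lemma polMat_row_sum (hπ : ∀ s, π s ∈ stdSimplex ℝ A)
    {P : S → A → S → ℝ} (hP : ∀ s a, P s a ∈ stdSimplex ℝ S) :
    ∀ s, ∑ s', polMat π P s s' = 1 := by
  intro s
  show ∑ s', ∑ a, π s a * P s a s' = 1
  rw [Finset.sum_comm]
  calc ∑ a, ∑ s', π s a * P s a s' = ∑ a, π s a * ∑ s', P s a s' := by
        congr 1; ext a; rw [Finset.mul_sum]
    _ = ∑ a, π s a := by
        congr 1; ext a; rw [(hP s a).2, mul_one]
    _ = 1 := (hπ s).2

lemma polMat_irred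
    (hU : ∀ s a, (U s a).Nonempty ∧ IsCompact (U s a) ∧ Convex ℝ (U s a) ∧
      U s a ⊆ stdSimplex ℝ S)
    (hirr : Assump1 U) (hπ : ∀ s, π s ∈ stdSimplex ℝ A)
    {P : S → A → S → ℝ} (hP : ∀ s a, P s a ∈ U s a) :
    IrredM (polMat π P) := by
  classical
  have hPs : ∀ s a, P s a ∈ stdSimplex ℝ S := fun s a => (hU s a).2.2.2 (hP s a)
  have hda : ∀ s : S, ∃ a, 0 < π s a := by
    intro s
    by_contra hcon
    push_neg at hcon
    have : ∑ a, π s a ≤ 0 := Finset.sum_nonpos fun a _ => hcon a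
    rw [(hπ s).2] at this; linarith
  choose d hd using hda
  set c : ℝ := Finset.univ.inf' Finset.univ_nonempty (fun s => π s (d s)) with hc
  have hcpos : 0 < c := by
    rw [hc, Finset.lt_inf'_iff]
    exact fun s _ => hd s
  have hcle : ∀ s, c ≤ π s (d s) := fun s =>
    Finset.inf'_le _ (Finset.mem_univ s)
  set B : Matrix S S ℝ := Matrix.of fun s s' => P s (d s) s' with hB
  have hBnn : ∀ s s', 0 ≤ B s s' := fun s s' => (hPs s (d s)).1 s'
  have hle : ∀ s s', c * B s s' ≤ polMat π P s s' := by
    intro s s'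
    calc c * B s s' ≤ π s (d s) * P s (d s) s' :=
          mul_le_mul_of_nonneg_right (hcle s) (hBnn s s')
      _ ≤ ∑ a, π s a * P s a s' :=
          Finset.single_le_sum (fun a _ => mul_nonneg ((hπ s).1 a) ((hPs s a).1 s'))
            (Finset.mem_univ (d s))
  have hBirr : IrredM B := hirr d P hP
  intro s s'
  obtain ⟨k, hk1, hkpos⟩ := hBirr s s'
  refine ⟨k, hk1, ?_⟩
  have := pow_entry_ge (le_of_lt hcpos) hBnn hle k s s'
  have hck : 0 < c ^ k := pow_pos hcpos k
  nlinarith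

/-- Uniform positivity of `n`-step transition probabilities over the compact
uncertainty set. -/
lemma exists_delta
    (hU : ∀ s a, (U s a).Nonempty ∧ IsCompact (U s a) ∧ Convex ℝ (U s a) ∧
      U s a ⊆ stdSimplex ℝ S)
    (hirr : Assump1 U) (hπ : ∀ s, π s ∈ stdSimplex ℝ A) :
    ∃ δ : ℝ, 0 < δ ∧ ∀ P : S → A → S → ℝ, (∀ s a, P s a ∈ U s a) →
      ∀ s s', ∃ k, 1 ≤ k ∧ k ≤ Fintype.card S ∧ δ ≤ ((polMat π P) ^ k) s s' := by
  classical
  set n := Fintype.card S with hn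
  have hnpos : 0 < n := Fintype.card_pos
  -- the compact set of kernels
  set PK : Set (S → A → S → ℝ) := Set.univ.pi fun s => Set.univ.pi fun a => U s a with hPK
  have hPKc : IsCompact PK :=
    isCompact_univ_pi fun s => isCompact_univ_pi fun a => (hU s a).2.1
  have hPKm : ∀ P : S → A → S → ℝ, (∀ s a, P s a ∈ U s a) ↔ P ∈ PK := by
    intro P
    simp [hPK, Set.mem_pi]
  have hPKne : PK.Nonempty := by
    refine ⟨fun s a => (hU s a).1.choose, (hPKm _).1 fun s a => (hU s a).1.choose_spec⟩
  -- the continuous map to matrices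
  have hcontM : Continuous fun P : S → A → S → ℝ => polMat π P := by
    apply continuous_matrix
    intro s s'
    apply continuous_finset_sum
    intro a _
    exact continuous_const.mul
      ((continuous_apply s').comp ((continuous_apply a).comp (continuous_apply s)))
  set KK : Set (Matrix S S ℝ) := (fun P => polMat π P) '' PK with hKK
  have hKKc : IsCompact KK := hPKc.image hcontM
  have hKKne : KK.Nonempty := hPKne.image _
  -- per-pair uniform positivity
  have hpair : ∀ s s' : S, ∃ δp : ℝ, 0 < δp ∧
      ∀ M ∈ KK, δp ≤ ∑ k ∈ Finset.Icc 1 n, (M ^ k) s s' := by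
    intro s s'
    have hfc : Continuous fun M : Matrix S S ℝ => ∑ k ∈ Finset.Icc 1 n, (M ^ k) s s' := by
      apply continuous_finset_sum
      intro k _
      exact (continuous_apply s').comp ((continuous_apply s).comp (continuous_pow k))
    obtain ⟨M₀, hM₀, hmin⟩ := hKKc.exists_isMinOn hKKne hfc.continuousOn
    refine ⟨∑ k ∈ Finset.Icc 1 n, (M₀ ^ k) s s', ?_, fun M hM => hmin hM⟩
    obtain ⟨P, hPPK, rfl⟩ := hM₀
    have hPU : ∀ s a, P s a ∈ U s a := (hPKm P).2 hPPK
    have hPs : ∀ s a, P s a ∈ stdSimplex ℝ S := fun s a => (hU s a).2.2.2 (hPU s a)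
    obtain ⟨k, hk1, hkn, hkpos⟩ := irred_within_card (polMat_nonneg hπ hPs)
      (polMat_row_sum hπ hPs) (polMat_irred hU hirr hπ hPU) s s'
    apply Finset.sum_pos'
    · exact fun k _ => pow_nonneg_entries (polMat_nonneg hπ hPs) k s s'
    · exact ⟨k, Finset.mem_Icc.2 ⟨hk1, hkn⟩, hkpos⟩
  choose D hD0 hDle using hpair
  refine ⟨(Finset.univ.inf' Finset.univ_nonempty fun p : S × S => D p.1 p.2) / n, ?_, ?_⟩
  · apply div_pos _ (by exact_mod_cast hnpos)
    rw [Finset.lt_inf'_iff]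
    exact fun p _ => hD0 p.1 p.2
  · intro P hP s s'
    set M := polMat π P with hM
    have hMK : M ∈ KK := ⟨P, (hPKm P).1 hP, rfl⟩
    have h1 : D s s' ≤ ∑ k ∈ Finset.Icc 1 n, (M ^ k) s s' := hDle s s' M hMK
    have h2 : (Finset.univ.inf' Finset.univ_nonempty fun p : S × S => D p.1 p.2) ≤ D s s' :=
      Finset.inf'_le _ (Finset.mem_univ (s, s'))
    -- extract one large term
    have hsum : ∑ k ∈ Finset.Icc 1 n,
        ((Finset.univ.inf' Finset.univ_nonempty fun p : S × S => D p.1 p.2) / n)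
        ≤ ∑ k ∈ Finset.Icc 1 n, (M ^ k) s s' := by
      rw [Finset.sum_const, Nat.card_Icc]
      simp only [Nat.add_sub_cancel, nsmul_eq_mul]
      rw [mul_div_assoc']
      rw [mul_comm, mul_div_assoc, div_self (by exact_mod_cast hnpos.ne' : (n:ℝ) ≠ 0), mul_one]
      linarith
    obtain ⟨k, hk, hkle⟩ := Finset.exists_le_of_sum_le ⟨1, Finset.mem_Icc.2 ⟨le_refl 1, hnpos⟩⟩ hsum
    rw [Finset.mem_Icc] at hk
    exact ⟨k, hk.1, hk.2, hkle⟩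

lemma one_sub_pow_le' {γ : ℝ} (h0 : 0 ≤ γ) (h1 : γ ≤ 1) (k : ℕ) :
    1 - γ ^ k ≤ k * (1 - γ) := by
  induction k with
  | zero => simp
  | succ k ih =>
    have hγk : γ ^ k ≤ 1 := pow_le_one₀ h0 h1
    have : 1 - γ ^ (k + 1) = (1 - γ) + γ * (1 - γ ^ k) := by ring
    rw [this]
    push_cast
    nlinarith

/-- The fixed-point equation rewritten with a minimizing kernel. -/
lemma disc_kernel
    (hU : ∀ s a, (U s a).Nonempty ∧ IsCompact (U s a) ∧ Convex ℝ (U s a) ∧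
      U s a ⊆ stdSimplex ℝ S)
    (hπ : ∀ s, π s ∈ stdSimplex ℝ A) {γ : ℝ}
    {V : S → ℝ} (hV : ∀ s, V s = ∑ a, π s a * (r s a + γ * suppF (U s a) V)) :
    ∃ P : S → A → S → ℝ, (∀ s a, P s a ∈ U s a) ∧
      (∀ s a, suppF (U s a) V = ∑ s', P s a s' * V s') ∧
      (∀ s, V s = polRew π r s + γ * ((polMat π P) *ᵥ V) s) := by
  have hsel : ∀ s a, ∃ p ∈ U s a, suppF (U s a) V = ∑ s', p s' * V s' :=
    fun s a => by
      obtain ⟨p, hp, heq, _⟩ := suppF_spec (hU s a).1 (hU s a).2.1 V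
      exact ⟨p, hp, heq⟩
  choose P hPU hPeq using hsel
  refine ⟨P, hPU, hPeq, fun s => ?_⟩
  rw [hV s]
  have : ((polMat π P) *ᵥ V) s = ∑ a, π s a * ∑ s', P s a s' * V s' := by
    rw [mulVec_apply']
    show ∑ s', (∑ a, π s a * P s a s') * V s' = _
    calc ∑ s', (∑ a, π s a * P s a s') * V s'
        = ∑ s', ∑ a, π s a * P s a s' * V s' := by
          congr 1; ext s'; rw [Finset.sum_mul]
      _ = ∑ a, ∑ s', π s a * P s a s' * V s' := Finset.sum_comm
      _ = ∑ a, π s a * ∑ s', P s a s' * V s' := by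
          congr 1; ext a; rw [Finset.mul_sum]; congr 1; ext s'; ring
  rw [this, polRew, Finset.mul_sum, ← Finset.sum_add_distrib]
  congr 1; ext a
  rw [hPeq s a]
  ring

/-- Uniform span bound on discounted value functions for `γ ∈ [1/2, 1)`. -/
lemma span_bound
    (hr : ∀ s a, r s a ∈ Set.Icc (0 : ℝ) 1)
    (hU : ∀ s a, (U s a).Nonempty ∧ IsCompact (U s a) ∧ Convex ℝ (U s a) ∧
      U s a ⊆ stdSimplex ℝ S)
    (hπ : ∀ s, π s ∈ stdSimplex ℝ A)
    {δ : ℝ} (hδ0 : 0 < δ)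
    (hδ : ∀ P : S → A → S → ℝ, (∀ s a, P s a ∈ U s a) →
      ∀ s s', ∃ k, 1 ≤ k ∧ k ≤ Fintype.card S ∧ δ ≤ ((polMat π P) ^ k) s s')
    {γ : ℝ} (hγh : 1/2 ≤ γ) (hγ1 : γ < 1)
    {V : S → ℝ} (hV : ∀ s, V s = ∑ a, π s a * (r s a + γ * suppF (U s a) V)) :
    ∀ s s', V s - V s' ≤ (Fintype.card S : ℝ) / ((2⁻¹ : ℝ) ^ (Fintype.card S) * δ) := by
  set n := Fintype.card S with hn
  have hγ0 : (0:ℝ) ≤ γ := by linarith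
  have hγle1 : γ ≤ 1 := le_of_lt hγ1
  obtain ⟨hV0, hV1⟩ := disc_bounds hr hU hπ hγ0 hγ1 hV
  obtain ⟨P, hPU, hPeq, hVM⟩ := disc_kernel hU hπ hV
  have hPs : ∀ s a, P s a ∈ stdSimplex ℝ S := fun s a => (hU s a).2.2.2 (hPU s a)
  set M := polMat π P with hM
  have hMnn := polMat_nonneg hπ hPs
  have hMrow := polMat_row_sum hπ hPs
  have hrπ : ∀ s, 0 ≤ polRew π r s :=
    fun s => Finset.sum_nonneg fun a _ => mul_nonneg ((hπ s).1 a) (hr s a).1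
  have hiter : ∀ j s, γ ^ j * ((M ^ j) *ᵥ V) s ≤ V s := by
    intro j
    induction j with
    | zero => intro s; simp [Matrix.one_mulVec]
    | succ j ih =>
      intro s
      have h1 : γ * ((M *ᵥ V) s) ≤ V s := by
        rw [hVM s]
        have := hrπ s
        linarith
      have h2 : (M *ᵥ fun t => γ ^ j * ((M ^ j) *ᵥ V) t) s ≤ (M *ᵥ V) s :=
        mulVec_mono hMnn ih s
      have h3 : (M *ᵥ fun t => γ ^ j * ((M ^ j) *ᵥ V) t) s
          = γ ^ j * ((M ^ (j + 1)) *ᵥ V) s := by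
        have e : (M ^ (j + 1)) *ᵥ V = M *ᵥ ((M ^ j) *ᵥ V) := by
          rw [Matrix.mulVec_mulVec, ← pow_succ']
        rw [e, mulVec_apply', mulVec_apply', Finset.mul_sum]
        congr 1; ext t; ring
      calc γ ^ (j + 1) * ((M ^ (j + 1)) *ᵥ V) s
          = γ * (γ ^ j * ((M ^ (j + 1)) *ᵥ V) s) := by ring
        _ = γ * ((M *ᵥ fun t => γ ^ j * ((M ^ j) *ᵥ V) t) s) := by rw [h3]
        _ ≤ γ * ((M *ᵥ V) s) := mul_le_mul_of_nonneg_left h2 hγ0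
        _ ≤ V s := h1
  obtain ⟨s0, _, hs0⟩ := Finset.exists_min_image Finset.univ V Finset.univ_nonempty
  have hmin : ∀ s, V s0 ≤ V s := fun s => hs0 s (Finset.mem_univ s)
  set m := V s0 with hm
  have hkey : ∀ s', V s' - m ≤ (n : ℝ) / ((2⁻¹ : ℝ) ^ n * δ) := by
    intro s'
    obtain ⟨k, hk1, hkn, hkδ⟩ := hδ P hPU s0 s'
    set β := (M ^ k) s0 s' with hβ
    have hβnn : 0 ≤ β := pow_nonneg_entries hMnn k s0 s'
    have hβ1 : β ≤ 1 := by
      have hsum := pow_row_sum hMrow k s0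
      have : β ≤ ∑ t, (M ^ k) s0 t :=
        Finset.single_le_sum (fun t _ => pow_nonneg_entries hMnn k s0 t) (Finset.mem_univ s')
      linarith
    have hrowk : ∑ t ∈ Finset.univ.erase s', (M ^ k) s0 t = 1 - β := by
      have := Finset.add_sum_erase Finset.univ (fun t => (M ^ k) s0 t) (Finset.mem_univ s')
      have hsum := pow_row_sum hMrow k s0
      linarith
    have hstep : β * V s' + (1 - β) * m ≤ ((M ^ k) *ᵥ V) s0 := by
      rw [mulVec_apply']
      rw [← Finset.add_sum_erase Finset.univ (fun t => (M ^ k) s0 t * V t) (Finset.mem_univ s')]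
      have h2 : ∑ t ∈ Finset.univ.erase s', (M ^ k) s0 t * m
          ≤ ∑ t ∈ Finset.univ.erase s', (M ^ k) s0 t * V t :=
        Finset.sum_le_sum fun t _ =>
          mul_le_mul_of_nonneg_left (hmin t) (pow_nonneg_entries hMnn k s0 t)
      have h3 : ∑ t ∈ Finset.univ.erase s', (M ^ k) s0 t * m = (1 - β) * m := by
        rw [← Finset.sum_mul, hrowk]
      linarith
    have hmain : γ ^ k * (β * V s' + (1 - β) * m) ≤ m := by
      calc γ ^ k * (β * V s' + (1 - β) * m)
          ≤ γ ^ k * (((M ^ k) *ᵥ V) s0) :=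
            mul_le_mul_of_nonneg_left hstep (pow_nonneg hγ0 k)
        _ ≤ V s0 := hiter k s0
    -- γ^k β (V s' - m) ≤ (1 - γ^k) m ≤ k (1-γ) m ≤ k ≤ n
    have hm0 : 0 ≤ m := hV0 s0
    have hm1 : m ≤ (1 - γ)⁻¹ := hV1 s0
    have h1γk : 1 - γ ^ k ≤ k * (1 - γ) := one_sub_pow_le' hγ0 hγle1 k
    have hγkpos : 0 < γ ^ k := pow_pos (by linarith) k
    have hbound : γ ^ k * β * (V s' - m) ≤ (n : ℝ) := by
      have e1 : γ ^ k * β * (V s' - m) ≤ (1 - γ ^ k) * m := by nlinarith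
      have e2 : (1 - γ ^ k) * m ≤ (k : ℝ) * (1 - γ) * m := by nlinarith
      have e3 : (k : ℝ) * (1 - γ) * m ≤ (k : ℝ) := by
        have h1γ : 0 < 1 - γ := by linarith
        have hmul : (1 - γ) * m ≤ 1 := by
          have := mul_le_mul_of_nonneg_left hm1 (le_of_lt h1γ)
          rwa [mul_inv_cancel₀ h1γ.ne'] at this
        nlinarith [Nat.cast_nonneg (α := ℝ) k]
      have e4 : (k : ℝ) ≤ (n : ℝ) := by exact_mod_cast hkn
      linarith
    have hq : (0:ℝ) < (2⁻¹ : ℝ) ^ n * δ := by positivity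
    have hqle : (2⁻¹ : ℝ) ^ n * δ ≤ γ ^ k * β := by
      have i1 : (2⁻¹:ℝ) ^ n ≤ γ ^ n := pow_le_pow_left₀ (by norm_num) (by linarith) n
      have i2 : γ ^ n ≤ γ ^ k := pow_le_pow_of_le_one hγ0 hγle1 hkn
      nlinarith
    rcases le_or_gt (V s' - m) 0 with h | h
    · exact h.trans (by positivity)
    · rw [le_div_iff₀ hq]
      calc (V s' - m) * ((2⁻¹ : ℝ) ^ n * δ) ≤ (V s' - m) * (γ ^ k * β) :=
            mul_le_mul_of_nonneg_left hqle (le_of_lt h)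
        _ = γ ^ k * β * (V s' - m) := by ring
        _ ≤ (n : ℝ) := hbound
  intro s s'
  have := hkey s
  have := hmin s'
  linarith

/-- A solution of the robust Bellman equation has its gain equal to the robust
average reward. -/
lemma bellman_verify
    (hr : ∀ s a, r s a ∈ Set.Icc (0 : ℝ) 1)
    (hU : ∀ s a, (U s a).Nonempty ∧ IsCompact (U s a) ∧ Convex ℝ (U s a) ∧
      U s a ⊆ stdSimplex ℝ S)
    (hπ : ∀ s, π s ∈ stdSimplex ℝ A)
    {g : ℝ} {h : S → ℝ}
    (hbe : ∀ s, h s = ∑ a, π s a * (r s a - g + suppF (U s a) h)) :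
    ∀ s, robAvgR U π r s = g := by
  classical
  -- bounds on h
  obtain ⟨sB, _, hsB⟩ := Finset.exists_max_image Finset.univ h Finset.univ_nonempty
  set B := h sB with hBdef
  have hhB : ∀ s, h s ≤ B := fun s => hsB s (Finset.mem_univ s)
  obtain ⟨sb, _, hsb⟩ := Finset.exists_min_image Finset.univ h Finset.univ_nonempty
  set b := h sb with hbdef
  have hbh : ∀ s, b ≤ h s := fun s => hsb s (Finset.mem_univ s)
  have hrπ0 : ∀ s, 0 ≤ polRew π r s :=
    fun s => Finset.sum_nonneg fun a _ => mul_nonneg ((hπ s).1 a) (hr s a).1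
  have hrπ1 : ∀ s, polRew π r s ≤ 1 :=
    fun s => dot_le_of_le (hπ s).1 (hπ s).2 (fun a => (hr s a).2)
  -- Part (i): lower bound for every kernel in U
  have hlb : ∀ P : S → A → S → ℝ, (∀ s a, P s a ∈ U s a) → ∀ s, g ≤ avgR π P r s := by
    intro P hPU s
    have hPs : ∀ s a, P s a ∈ stdSimplex ℝ S := fun s a => (hU s a).2.2.2 (hPU s a)
    set M := polMat π P with hM
    have hMnn := polMat_nonneg hπ hPs
    have hMrow := polMat_row_sum hπ hPs
    have hw : ∀ t, g + h t - (M *ᵥ h) t ≤ polRew π r t := by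
      intro t
      have hMh : (M *ᵥ h) t = ∑ a, π t a * ∑ s', P t a s' * h s' := by
        rw [mulVec_apply']
        show ∑ s', (∑ a, π t a * P t a s') * h s' = _
        calc ∑ s', (∑ a, π t a * P t a s') * h s'
            = ∑ s', ∑ a, π t a * P t a s' * h s' := by
              congr 1; ext s'; rw [Finset.sum_mul]
          _ = ∑ a, ∑ s', π t a * P t a s' * h s' := Finset.sum_comm
          _ = ∑ a, π t a * ∑ s', P t a s' * h s' := by
              congr 1; ext a; rw [Finset.mul_sum]; congr 1; ext s'; ring
      have hle : h t ≤ ∑ a, π t a * (r t a - g + ∑ s', P t a s' * h s') := by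
        rw [hbe t]
        apply Finset.sum_le_sum
        intro a _
        apply mul_le_mul_of_nonneg_left _ ((hπ t).1 a)
        have := suppF_le (hU t a).1 (hU t a).2.1 h (hPU t a)
        linarith
      have hexp : ∑ a, π t a * (r t a - g + ∑ s', P t a s' * h s')
          = polRew π r t - g + (M *ᵥ h) t := by
        have hg : ∑ a, π t a * g = g := by rw [← Finset.sum_mul, (hπ t).2, one_mul]
        have step : ∀ a : A, π t a * (r t a - g + ∑ s', P t a s' * h s')
            = (π t a * r t a - π t a * g) + π t a * ∑ s', P t a s' * h s' := by
          intro a; ring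
        rw [Finset.sum_congr rfl (fun a _ => step a), Finset.sum_add_distrib,
          Finset.sum_sub_distrib, hg, hMh]
        rfl
      rw [hexp] at hle
      linarith
    -- average of partial sums is eventually ≥ g + (h s - B)/n
    have hsum : ∀ N : ℕ, (N : ℝ) * g + h s - ((M ^ N) *ᵥ h) s
        ≤ ∑ t ∈ Finset.range N, ((M ^ t) *ᵥ polRew π r) s := by
      intro N
      rw [← telescope_sum hMnn hMrow g h N s]
      apply Finset.sum_le_sum
      intro t _
      exact mulVec_mono (pow_nonneg_entries hMnn t) hw s
    have hMNh : ∀ N, ((M ^ N) *ᵥ h) s ≤ B :=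
      fun N => mulVec_le_of_le (pow_nonneg_entries hMnn N) (pow_row_sum hMrow N) hhB s
    have hub : ∀ N : ℕ,
        (∑ t ∈ Finset.range N, ((M ^ t) *ᵥ polRew π r) s) / N ≤ 1 := by
      intro N
      rcases Nat.eq_zero_or_pos N with hN | hN
      · subst hN; simp
      · rw [div_le_one (by exact_mod_cast hN)]
        calc ∑ t ∈ Finset.range N, ((M ^ t) *ᵥ polRew π r) s
            ≤ ∑ t ∈ Finset.range N, 1 :=
              Finset.sum_le_sum fun t _ =>
                mulVec_le_of_le (pow_nonneg_entries hMnn t) (pow_row_sum hMrow t) hrπ1 s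
          _ = N := by rw [Finset.sum_const, Finset.card_range, nsmul_eq_mul, mul_one]
    have hclb : Tendsto (fun N : ℕ => g + (h s - B) / N) atTop (nhds g) := by
      have := (tendsto_const_div_atTop_nhds_zero_nat (h s - B)).const_add g
      simpa using this
    have hev : ∀ᶠ N : ℕ in atTop, g + (h s - B) / N
        ≤ (∑ t ∈ Finset.range N, ((M ^ t) *ᵥ polRew π r) s) / N := by
      filter_upwards [eventually_ge_atTop 1] with N hN
      have hNpos : (0:ℝ) < N := by exact_mod_cast hN
      have key : (N : ℝ) * g + (h s - B)
          ≤ ∑ t ∈ Finset.range N, ((M ^ t) *ᵥ polRew π r) s := by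
        have := hsum N
        have := hMNh N
        linarith
      calc g + (h s - B) / N = ((N : ℝ) * g + (h s - B)) / N := by
            field_simp
        _ ≤ _ := by gcongr
    have : liminf (fun N : ℕ => g + (h s - B) / N) atTop
        ≤ liminf (fun N : ℕ =>
          (∑ t ∈ Finset.range N, ((M ^ t) *ᵥ polRew π r) s) / N) atTop := by
      exact liminf_le_liminf hev hclb.isBoundedUnder_ge
        ((isBoundedUnder_of ⟨1, fun N => hub N⟩).isCoboundedUnder_ge)
    rw [hclb.liminf_eq] at this
    exact this
  -- Part (ii): the minimizing kernel attains the gain exactly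
  have hsel : ∀ s a, ∃ p ∈ U s a, suppF (U s a) h = ∑ s', p s' * h s' :=
    fun s a => by
      obtain ⟨p, hp, heq, _⟩ := suppF_spec (hU s a).1 (hU s a).2.1 h
      exact ⟨p, hp, heq⟩
  choose Ps hPsU hPseq using hsel
  have hPss : ∀ s a, Ps s a ∈ stdSimplex ℝ S := fun s a => (hU s a).2.2.2 (hPsU s a)
  have hattain : ∀ s, avgR π Ps r s = g := by
    intro s
    set M := polMat π Ps with hM
    have hMnn := polMat_nonneg hπ hPss
    have hMrow := polMat_row_sum hπ hPss
    have hweq : ∀ t, polRew π r t = g + h t - (M *ᵥ h) t := by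
      intro t
      have hMh : (M *ᵥ h) t = ∑ a, π t a * ∑ s', Ps t a s' * h s' := by
        rw [mulVec_apply']
        show ∑ s', (∑ a, π t a * Ps t a s') * h s' = _
        calc ∑ s', (∑ a, π t a * Ps t a s') * h s'
            = ∑ s', ∑ a, π t a * Ps t a s' * h s' := by
              congr 1; ext s'; rw [Finset.sum_mul]
          _ = ∑ a, ∑ s', π t a * Ps t a s' * h s' := Finset.sum_comm
          _ = ∑ a, π t a * ∑ s', Ps t a s' * h s' := by
              congr 1; ext a; rw [Finset.mul_sum]; congr 1; ext s'; ring
      have hg : ∑ a, π t a * g = g := by rw [← Finset.sum_mul, (hπ t).2, one_mul]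
      have step : ∀ a : A, π t a * (r t a - g + suppF (U t a) h)
          = (π t a * r t a - π t a * g) + π t a * ∑ s', Ps t a s' * h s' := by
        intro a; rw [hPseq t a]; ring
      have hexp : h t = polRew π r t - g + (M *ᵥ h) t := by
        conv_lhs => rw [hbe t]
        rw [Finset.sum_congr rfl (fun a _ => step a), Finset.sum_add_distrib,
          Finset.sum_sub_distrib, hg, hMh]
        rfl
      linarith [hexp]
    have hsum : ∀ N : ℕ, ∑ t ∈ Finset.range N, ((M ^ t) *ᵥ polRew π r) s
        = (N : ℝ) * g + h s - ((M ^ N) *ᵥ h) s := by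
      intro N
      rw [← telescope_sum hMnn hMrow g h N s]
      apply Finset.sum_congr rfl
      intro t _
      congr 1
      ext u
      rw [← hweq u]
    have hMNh : ∀ N, b ≤ ((M ^ N) *ᵥ h) s ∧ ((M ^ N) *ᵥ h) s ≤ B := fun N =>
      ⟨le_mulVec_of_le (pow_nonneg_entries hMnn N) (pow_row_sum hMrow N) hbh s,
       mulVec_le_of_le (pow_nonneg_entries hMnn N) (pow_row_sum hMrow N) hhB s⟩
    have htend : Tendsto (fun N : ℕ =>
        (∑ t ∈ Finset.range N, ((M ^ t) *ᵥ polRew π r) s) / N) atTop (nhds g) := by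
      have hlo : Tendsto (fun N : ℕ => g + (h s - B) / N) atTop (nhds g) := by
        have := (tendsto_const_div_atTop_nhds_zero_nat (h s - B)).const_add g
        simpa using this
      have hhi : Tendsto (fun N : ℕ => g + (h s - b) / N) atTop (nhds g) := by
        have := (tendsto_const_div_atTop_nhds_zero_nat (h s - b)).const_add g
        simpa using this
      apply tendsto_of_tendsto_of_tendsto_of_le_of_le' hlo hhi
      · filter_upwards [eventually_ge_atTop 1] with N hN
        have hNpos : (0:ℝ) < N := by exact_mod_cast hN
        have key : (N : ℝ) * g + (h s - B)
            ≤ ∑ t ∈ Finset.range N, ((M ^ t) *ᵥ polRew π r) s := by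
          rw [hsum N]
          have := (hMNh N).2
          linarith
        calc g + (h s - B) / N = ((N : ℝ) * g + (h s - B)) / N := by field_simp
          _ ≤ _ := by gcongr
      · filter_upwards [eventually_ge_atTop 1] with N hN
        have hNpos : (0:ℝ) < N := by exact_mod_cast hN
        have key : ∑ t ∈ Finset.range N, ((M ^ t) *ᵥ polRew π r) s
            ≤ (N : ℝ) * g + (h s - b) := by
          rw [hsum N]
          have := (hMNh N).1
          linarith
        calc (∑ t ∈ Finset.range N, ((M ^ t) *ᵥ polRew π r) s) / N
            ≤ ((N : ℝ) * g + (h s - b)) / N := by gcongr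
          _ = g + (h s - b) / N := by field_simp
    exact htend.liminf_eq
  -- Part (iii): conclude
  intro s
  have hmem : g ∈ {x | ∃ P : S → A → S → ℝ, (∀ s' a, P s' a ∈ U s' a) ∧ x = avgR π P r s} :=
    ⟨Ps, fun s' a => hPsU s' a, (hattain s).symm⟩
  have hlb' : ∀ x ∈ {x | ∃ P : S → A → S → ℝ,
      (∀ s' a, P s' a ∈ U s' a) ∧ x = avgR π P r s}, g ≤ x := by
    rintro x ⟨P, hP, rfl⟩
    exact hlb P hP s
  exact le_antisymm (csInf_le ⟨g, hlb'⟩ hmem) (le_csInf ⟨g, hmem⟩ hlb')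

/-- Existence of a solution to the robust average-reward Bellman equation. -/
lemma bellman_exists
    (hr : ∀ s a, r s a ∈ Set.Icc (0 : ℝ) 1)
    (hU : ∀ s a, (U s a).Nonempty ∧ IsCompact (U s a) ∧ Convex ℝ (U s a) ∧
      U s a ⊆ stdSimplex ℝ S)
    (hirr : Assump1 U)
    (hπ : ∀ s, π s ∈ stdSimplex ℝ A) :
    ∃ (g : ℝ) (h : S → ℝ), ∀ s, h s = ∑ a, π s a * (r s a - g + suppF (U s a) h) := by
  classical
  obtain ⟨δ, hδ0, hδ⟩ := exists_delta hU hirr hπ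
  set n := Fintype.card S with hn
  set C : ℝ := (n : ℝ) / ((2⁻¹ : ℝ) ^ n * δ) with hC
  have hC0 : 0 ≤ C := by positivity
  -- discount sequence
  set γ : ℕ → ℝ := fun j => 1 - ((j : ℝ) + 2)⁻¹ with hγ
  have hγpos : ∀ j : ℕ, (0:ℝ) < ((j : ℝ) + 2)⁻¹ := fun j => by positivity
  have hγinvle : ∀ j : ℕ, ((j : ℝ) + 2)⁻¹ ≤ 1/2 := by
    intro j
    rw [inv_le_comm₀ (by positivity) (by norm_num)]
    push_cast
    linarith [Nat.cast_nonneg (α := ℝ) j]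
  have hγh : ∀ j, 1/2 ≤ γ j := fun j => by
    have := hγinvle j; simp only [hγ]; linarith
  have hγ1 : ∀ j, γ j < 1 := fun j => by
    have := hγpos j; simp only [hγ]; linarith
  have hγ0 : ∀ j, (0:ℝ) ≤ γ j := fun j => le_trans (by norm_num : (0:ℝ) ≤ 1/2) (hγh j)
  -- discounted value functions
  have hVex : ∀ j : ℕ, ∃ V : S → ℝ,
      ∀ s, V s = ∑ a, π s a * (r s a + γ j * suppF (U s a) V) :=
    fun j => disc_fixed hU hπ (hγ0 j) (hγ1 j)
  choose V hV using hVex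
  have hVb : ∀ j, (∀ s, 0 ≤ V j s) ∧ (∀ s, V j s ≤ (1 - γ j)⁻¹) :=
    fun j => disc_bounds hr hU hπ (hγ0 j) (hγ1 j) (hV j)
  set m : ℕ → ℝ := fun j => Finset.univ.inf' Finset.univ_nonempty (V j) with hm
  have hmle : ∀ j s, m j ≤ V j s := fun j s => Finset.inf'_le _ (Finset.mem_univ s)
  have hmeq : ∀ j, ∃ s0, m j = V j s0 := fun j =>
    Finset.exists_mem_eq_inf' Finset.univ_nonempty (V j) |>.imp fun s0 hs0 => hs0.2
  have hm0 : ∀ j, 0 ≤ m j := by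
    intro j
    obtain ⟨s0, hs0⟩ := hmeq j
    rw [hs0]; exact (hVb j).1 s0
  have hm1 : ∀ j, m j ≤ (1 - γ j)⁻¹ := by
    intro j
    obtain ⟨s0, hs0⟩ := hmeq j
    rw [hs0]; exact (hVb j).2 s0
  have hspan : ∀ j s, V j s - m j ≤ C := by
    intro j s
    obtain ⟨s0, hs0⟩ := hmeq j
    rw [hs0]
    exact span_bound hr hU hπ hδ0 hδ (hγh j) (hγ1 j) (hV j) s s0
  -- the bounded sequence of (relative value, gain) pairs
  set x : ℕ → (S → ℝ) × ℝ := fun j => (fun s => V j s - m j, (1 - γ j) * m j) with hx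
  have hxmem : ∀ j, x j ∈ (Set.univ.pi fun _ : S => Set.Icc (0:ℝ) C) ×ˢ Set.Icc (0:ℝ) 1 := by
    intro j
    refine ⟨fun s _ => ?_, ?_⟩
    · show V j s - m j ∈ Set.Icc (0:ℝ) C
      exact ⟨by linarith [hmle j s], hspan j s⟩
    · show (1 - γ j) * m j ∈ Set.Icc (0:ℝ) 1
      have h1γ : 0 < 1 - γ j := by have := hγ1 j; linarith
      constructor
      · exact mul_nonneg (le_of_lt h1γ) (hm0 j)
      · have h2 := mul_le_mul_of_nonneg_left (hm1 j) (le_of_lt h1γ)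
        rwa [mul_inv_cancel₀ h1γ.ne'] at h2
  have hcomp : IsCompact ((Set.univ.pi fun _ : S => Set.Icc (0:ℝ) C) ×ˢ Set.Icc (0:ℝ) 1) :=
    (isCompact_univ_pi fun _ => isCompact_Icc).prod isCompact_Icc
  obtain ⟨p, _, φ, hφ, hconv⟩ := hcomp.tendsto_subseq hxmem
  obtain ⟨h, g⟩ := p
  refine ⟨g, h, ?_⟩
  -- the fixed-point equation in relative form
  have heqj : ∀ j s, (x j).1 s
      = (∑ a, π s a * (r s a + γ j * suppF (U s a) (x j).1)) - (x j).2 := by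
    intro j s
    have htrans : ∀ a, suppF (U s a) (V j) = suppF (U s a) (x j).1 + m j := by
      intro a
      have : V j = fun s' => (x j).1 s' + m j := by
        ext s'; simp [hx]
      rw [this]
      exact suppF_add_const (hU s a).1 (hU s a).2.1 (hU s a).2.2.2 _ (m j)
    have hgsum : ∑ a, π s a * (γ j * m j) = γ j * m j := by
      rw [← Finset.sum_mul, (hπ s).2, one_mul]
    have step : ∀ a : A, π s a * (r s a + γ j * suppF (U s a) (V j))
        = π s a * (r s a + γ j * suppF (U s a) (x j).1) + π s a * (γ j * m j) := by
      intro a; rw [htrans a]; ring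
    have hVs := hV j s
    rw [Finset.sum_congr rfl (fun a _ => step a), Finset.sum_add_distrib, hgsum] at hVs
    have : (x j).1 s = V j s - m j := rfl
    rw [this, hVs]
    simp only [hx]
    ring
  -- pass to the limit along the subsequence
  intro s
  have hseq1 : Tendsto (fun i => (x (φ i)).1) atTop (nhds h) := by
    have := (continuous_fst.tendsto (h, g)).comp hconv
    exact this
  have hseq2 : Tendsto (fun i => (x (φ i)).2) atTop (nhds g) := by
    have := (continuous_snd.tendsto (h, g)).comp hconv
    exact this
  have hγlim : Tendsto (fun i => γ (φ i)) atTop (nhds 1) := by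
    have h0 : Tendsto (fun j : ℕ => ((j : ℝ) + 2)⁻¹) atTop (nhds 0) := by
      apply tendsto_inv_atTop_zero.comp
      exact tendsto_atTop_add_const_right atTop 2 tendsto_natCast_atTop_atTop
    have h1 : Tendsto (fun j : ℕ => γ j) atTop (nhds 1) := by
      have := tendsto_const_nhds (x := (1:ℝ)) (f := atTop (α := ℕ)) |>.sub h0
      simpa [hγ] using this
    exact h1.comp hφ.tendsto_atTop
  have hLHS : Tendsto (fun i => (x (φ i)).1 s) atTop (nhds (h s)) :=
    ((continuous_apply s).tendsto h).comp hseq1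
  have hRHS : Tendsto
      (fun i => (∑ a, π s a * (r s a + γ (φ i) * suppF (U s a) (x (φ i)).1)) - (x (φ i)).2)
      atTop (nhds ((∑ a, π s a * (r s a + 1 * suppF (U s a) h)) - g)) := by
    apply Tendsto.sub _ hseq2
    apply tendsto_finset_sum
    intro a _
    apply Tendsto.const_mul
    apply Tendsto.const_add
    apply Tendsto.mul hγlim
    exact (((suppF_lipschitz (hU s a).1 (hU s a).2.1
      (hU s a).2.2.2).continuous).tendsto h).comp hseq1
  have heq : h s = (∑ a, π s a * (r s a + 1 * suppF (U s a) h)) - g := by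
    have := tendsto_nhds_unique (hLHS.congr (fun i => heqj (φ i) s)) hRHS
    exact this
  rw [heq]
  have hgsum : ∑ a, π s a * g = g := by rw [← Finset.sum_mul, (hπ s).2, one_mul]
  have step : ∀ a : A, π s a * (r s a - g + suppF (U s a) h)
      = π s a * (r s a + 1 * suppF (U s a) h) - π s a * g := by
    intro a; ring
  rw [Finset.sum_congr rfl (fun a _ => step a), Finset.sum_sub_distrib, hgsum]

end pol


/-- Under Assumption 1, for any stationary policy `π`, the robust
average-reward Bellman equation is solvable, and its gain component is the robust
average reward of `π` (a constant over states). -/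
theorem stmt0 {S A : Type*} [Fintype S] [DecidableEq S] [Nonempty S]
    [Fintype A] [Nonempty A]
    (r : S → A → ℝ) (hr : ∀ s a, r s a ∈ Set.Icc (0 : ℝ) 1)
    (U : S → A → Set (S → ℝ))
    (hU : ∀ s a, (U s a).Nonempty ∧ IsCompact (U s a) ∧ Convex ℝ (U s a) ∧
      U s a ⊆ stdSimplex ℝ S)
    (hirr : Assump1 U)
    (π : S → A → ℝ) (hπ : ∀ s, π s ∈ stdSimplex ℝ A) :
    ∃ (g : ℝ) (h : S → ℝ),
      (∀ s, h s = ∑ a, π s a * (r s a - g + suppF (U s a) h)) ∧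
      (∀ s, robAvgR U π r s = g) := by
  obtain ⟨g, h, hbe⟩ := bellman_exists hr hU hirr hπ
  exact ⟨g, h, hbe, bellman_verify hr hU hπ hbe⟩
end

section
/- Under Assumption 1, the optimal robust average-reward Bellman equation is solvable: there exist a constant g ∈ ℝ and a vector h : S → ℝ such that h(s) = max_{a ∈ A} { r(s,a) − g + σ_{𝒫^a_s}(h) } for every s ∈ S, and moreover g equals the optimal robust average reward, i.e. g = sup over all stationary policies π of g^π_𝒫(s), for every s ∈ S. -/
open scoped BigOperators
open Matrix Filter

set_option linter.unusedSectionVars false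
set_option linter.unusedVariables false
set_option maxHeartbeats 2000000

namespace Stmt1Aux
section C1

variable {S : Type*} [Fintype S]

lemma continuous_pair (V : S → ℝ) : Continuous (fun p : S → ℝ => ∑ s', p s' * V s') := by
  exact continuous_finset_sum _ fun s _ => (continuous_apply s).mul continuous_const

lemma mem_simplex_nonneg {p : S → ℝ} (hp : p ∈ stdSimplex ℝ S) (s : S) : 0 ≤ p s := hp.1 s
lemma mem_simplex_sum {p : S → ℝ} (hp : p ∈ stdSimplex ℝ S) : ∑ s, p s = 1 := hp.2

lemma pair_le {p V : S → ℝ} {c : ℝ} (hp : p ∈ stdSimplex ℝ S) (h : ∀ s, V s ≤ c) :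
    ∑ s', p s' * V s' ≤ c := by
  calc ∑ s', p s' * V s' ≤ ∑ s', p s' * c :=
        Finset.sum_le_sum fun s _ => mul_le_mul_of_nonneg_left (h s) (hp.1 s)
    _ = c := by rw [← Finset.sum_mul, hp.2, one_mul]

lemma le_pair {p V : S → ℝ} {c : ℝ} (hp : p ∈ stdSimplex ℝ S) (h : ∀ s, c ≤ V s) :
    c ≤ ∑ s', p s' * V s' := by
  calc c = ∑ s', p s' * c := by rw [← Finset.sum_mul, hp.2, one_mul]
    _ ≤ ∑ s', p s' * V s' :=
        Finset.sum_le_sum fun s _ => mul_le_mul_of_nonneg_left (h s) (hp.1 s)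

variable [Nonempty S] {Q : Set (S → ℝ)}

lemma suppF_bddBelow (hQs : Q ⊆ stdSimplex ℝ S) (V : S → ℝ) :
    BddBelow ((fun p => ∑ s', p s' * V s') '' Q) := by
  refine ⟨Finset.univ.inf' Finset.univ_nonempty V, ?_⟩
  rintro x ⟨p, hp, rfl⟩
  exact le_pair (hQs hp) fun s => Finset.inf'_le _ (Finset.mem_univ s)

lemma suppF_le_pair (hQs : Q ⊆ stdSimplex ℝ S) {p : S → ℝ} (hp : p ∈ Q) (V : S → ℝ) :
    suppF Q V ≤ ∑ s', p s' * V s' :=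
  csInf_le (suppF_bddBelow hQs V) ⟨p, hp, rfl⟩

lemma le_suppF (hQ1 : Q.Nonempty) (hQs : Q ⊆ stdSimplex ℝ S) {V : S → ℝ} {c : ℝ}
    (h : ∀ s, c ≤ V s) : c ≤ suppF Q V := by
  refine le_csInf (hQ1.image _) ?_
  rintro x ⟨p, hp, rfl⟩
  exact le_pair (hQs hp) h

lemma suppF_le_of_le (hQ1 : Q.Nonempty) (hQs : Q ⊆ stdSimplex ℝ S) {V : S → ℝ} {c : ℝ}
    (h : ∀ s, V s ≤ c) : suppF Q V ≤ c := by
  obtain ⟨p, hp⟩ := hQ1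
  exact (suppF_le_pair hQs hp V).trans (pair_le (hQs hp) h)

lemma suppF_exists_min (hQ1 : Q.Nonempty) (hQ2 : IsCompact Q) (V : S → ℝ) :
    ∃ p ∈ Q, suppF Q V = ∑ s', p s' * V s' := by
  obtain ⟨p, hp, hmin⟩ := hQ2.exists_isMinOn hQ1 (continuous_pair V).continuousOn
  refine ⟨p, hp, ?_⟩
  refine le_antisymm (csInf_le ?_ ⟨p, hp, rfl⟩) (le_csInf (hQ1.image _) ?_)
  · exact ⟨∑ s', p s' * V s', by rintro x ⟨q, hq, rfl⟩; exact hmin hq⟩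
  · rintro x ⟨q, hq, rfl⟩; exact hmin hq

lemma suppF_add_const (hQ1 : Q.Nonempty) (hQ2 : IsCompact Q) (hQs : Q ⊆ stdSimplex ℝ S)
    (V : S → ℝ) (c : ℝ) : suppF Q (fun s => V s + c) = suppF Q V + c := by
  have key : ∀ p ∈ Q, ∑ s', p s' * (V s' + c) = (∑ s', p s' * V s') + c := by
    intro p hp
    have e : ∑ s', p s' * (V s' + c) = ∑ s', (p s' * V s' + p s' * c) :=
      Finset.sum_congr rfl fun s _ => by ring
    rw [e, Finset.sum_add_distrib, ← Finset.sum_mul, (hQs hp).2, one_mul]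
  refine le_antisymm ?_ ?_
  · obtain ⟨p, hp, hps⟩ := suppF_exists_min hQ1 hQ2 V
    calc suppF Q (fun s => V s + c) ≤ ∑ s', p s' * (V s' + c) := suppF_le_pair hQs hp _
      _ = suppF Q V + c := by rw [key p hp, hps]
  · refine le_csInf (hQ1.image _) ?_
    rintro x ⟨p, hp, rfl⟩
    have := suppF_le_pair hQs hp V
    simp only [key p hp]
    linarith

lemma suppF_mono (hQ1 : Q.Nonempty) (hQ2 : IsCompact Q) (hQs : Q ⊆ stdSimplex ℝ S)
    {V W : S → ℝ} (h : ∀ s, V s ≤ W s) : suppF Q V ≤ suppF Q W := by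
  obtain ⟨p, hp, hps⟩ := suppF_exists_min hQ1 hQ2 W
  rw [hps]
  exact (suppF_le_pair hQs hp V).trans
    (Finset.sum_le_sum fun s _ => mul_le_mul_of_nonneg_left (h s) ((hQs hp).1 s))

lemma suppF_dist_le (hQ1 : Q.Nonempty) (hQ2 : IsCompact Q) (hQs : Q ⊆ stdSimplex ℝ S)
    {V W : S → ℝ} {c : ℝ} (h : ∀ s, |V s - W s| ≤ c) :
    |suppF Q V - suppF Q W| ≤ c := by
  have key : ∀ V W : S → ℝ, (∀ s, |V s - W s| ≤ c) → suppF Q V - suppF Q W ≤ c := by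
    intro V W h
    obtain ⟨p, hp, hps⟩ := suppF_exists_min hQ1 hQ2 W
    have h1 : suppF Q V ≤ ∑ s', p s' * V s' := suppF_le_pair hQs hp V
    have h2 : ∑ s', p s' * V s' - ∑ s', p s' * W s' ≤ c := by
      rw [← Finset.sum_sub_distrib]
      have : ∀ s' ∈ Finset.univ, p s' * V s' - p s' * W s' ≤ p s' * c := by
        intro s _
        rw [← mul_sub]
        exact mul_le_mul_of_nonneg_left ((abs_le.mp (h s)).2) ((hQs hp).1 s)
      calc ∑ s', (p s' * V s' - p s' * W s') ≤ ∑ s', p s' * c := Finset.sum_le_sum this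
        _ = c := by rw [← Finset.sum_mul, (hQs hp).2, one_mul]
    linarith [hps]
  have h' : ∀ s, |W s - V s| ≤ c := fun s => by rw [abs_sub_comm]; exact h s
  exact abs_sub_le_iff.mpr ⟨key V W h, key W V h'⟩

/-! ### finite sup helpers -/

variable {A : Type*} [Fintype A] [Nonempty A]

lemma exists_ciSup_eq (F : A → ℝ) : ∃ a, (⨆ b, F b) = F a ∧ ∀ b, F b ≤ F a := by
  obtain ⟨a, ha⟩ := Finite.exists_max F
  exact ⟨a, le_antisymm (ciSup_le ha) (le_ciSup (Set.Finite.bddAbove (Set.finite_range F)) a), ha⟩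

lemma le_ciSup' (F : A → ℝ) (a : A) : F a ≤ ⨆ b, F b :=
  le_ciSup (Set.Finite.bddAbove (Set.finite_range F)) a

lemma ciSup_dist_le {F G : A → ℝ} {c : ℝ} (h : ∀ a, |F a - G a| ≤ c) :
    |(⨆ a, F a) - ⨆ a, G a| ≤ c := by
  have key : ∀ F G : A → ℝ, (∀ a, |F a - G a| ≤ c) → (⨆ a, F a) - (⨆ a, G a) ≤ c := by
    intro F G h
    obtain ⟨a, ha, _⟩ := exists_ciSup_eq F
    have := le_ciSup' G a
    have := (abs_le.mp (h a)).2
    linarith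
  have h' : ∀ a, |G a - F a| ≤ c := fun a => by rw [abs_sub_comm]; exact h a
  exact abs_sub_le_iff.mpr ⟨key F G h, key G F h'⟩


end C1
section Mat


variable {S : Type*} [Fintype S] [DecidableEq S]

def IsStoch (M : Matrix S S ℝ) : Prop :=
  (∀ s s', 0 ≤ M s s') ∧ ∀ s, ∑ s', M s s' = 1

lemma IsStoch.mul {M N : Matrix S S ℝ} (hM : IsStoch M) (hN : IsStoch N) : IsStoch (M * N) := by
  constructor
  · intro s s'
    rw [Matrix.mul_apply]
    exact Finset.sum_nonneg fun x _ => mul_nonneg (hM.1 s x) (hN.1 x s')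
  · intro s
    simp only [Matrix.mul_apply]
    rw [Finset.sum_comm]
    calc ∑ x, ∑ s', M s x * N x s' = ∑ x, M s x * ∑ s', N x s' := by
          simp [Finset.mul_sum]
      _ = 1 := by simp only [hN.2]; simpa using hM.2 s

lemma IsStoch.pow {M : Matrix S S ℝ} (hM : IsStoch M) (k : ℕ) : IsStoch (M ^ k) := by
  induction k with
  | zero => constructor
            · intro s s'; simp [Matrix.one_apply]; split <;> norm_num
            · intro s; simp [Matrix.one_apply]
  | succ k ih => rw [pow_succ]; exact ih.mul hM

lemma mulVec_apply' (M : Matrix S S ℝ) (v : S → ℝ) (s : S) :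
    (M *ᵥ v) s = ∑ s', M s s' * v s' := rfl

lemma mulVec_mono {M : Matrix S S ℝ} (hM : ∀ s s', 0 ≤ M s s') {u v : S → ℝ}
    (h : ∀ s, u s ≤ v s) (s : S) : (M *ᵥ u) s ≤ (M *ᵥ v) s :=
  Finset.sum_le_sum fun x _ => mul_le_mul_of_nonneg_left (h x) (hM s x)

lemma mulVec_le {M : Matrix S S ℝ} (hM : IsStoch M) {v : S → ℝ} {c : ℝ}
    (h : ∀ s, v s ≤ c) (s : S) : (M *ᵥ v) s ≤ c := by
  calc (M *ᵥ v) s ≤ ∑ s', M s s' * c :=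
        Finset.sum_le_sum fun x _ => mul_le_mul_of_nonneg_left (h x) (hM.1 s x)
    _ = c := by rw [← Finset.sum_mul, hM.2 s, one_mul]

lemma le_mulVec {M : Matrix S S ℝ} (hM : IsStoch M) {v : S → ℝ} {c : ℝ}
    (h : ∀ s, c ≤ v s) (s : S) : c ≤ (M *ᵥ v) s := by
  calc c = ∑ s', M s s' * c := by rw [← Finset.sum_mul, hM.2 s, one_mul]
    _ ≤ (M *ᵥ v) s :=
        Finset.sum_le_sum fun x _ => mul_le_mul_of_nonneg_left (h x) (hM.1 s x)

lemma exists_pos_term {f : S → ℝ} (hf : ∀ x, 0 ≤ f x) (h : 0 < ∑ x, f x) :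
    ∃ x, 0 < f x := by
  by_contra hc
  push_neg at hc
  have : ∑ x, f x ≤ 0 := Finset.sum_nonpos fun x _ => hc x
  linarith

/-- Shortening: irreducibility implies reachability within `card S` steps. -/
lemma reach_short {M : Matrix S S ℝ} (hM : IsStoch M)
    (hirr : ∀ s s' : S, ∃ k : ℕ, 1 ≤ k ∧ 0 < (M ^ k) s s') (s s' : S) :
    ∃ k : ℕ, 1 ≤ k ∧ k ≤ Fintype.card S ∧ 0 < (M ^ k) s s' := by
  classical
  set n := Fintype.card S with hn
  set R : ℕ → Finset S :=
    fun j => Finset.univ.filter (fun y => ∃ i, 1 ≤ i ∧ i ≤ j ∧ 0 < (M ^ i) s y) with hR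
  have memR : ∀ j y, y ∈ R j ↔ ∃ i, 1 ≤ i ∧ i ≤ j ∧ 0 < (M ^ i) s y := by
    intro j y; simp [hR]
  have mono : ∀ {j m}, j ≤ m → R j ⊆ R m := by
    intro j m hjm y hy
    obtain ⟨i, h1, h2, h3⟩ := (memR j y).mp hy
    exact (memR m y).mpr ⟨i, h1, h2.trans hjm, h3⟩
  have forward : ∀ j x y, x ∈ R j → 0 < M x y → y ∈ R (j + 1) := by
    intro j x y hx hxy
    obtain ⟨i, h1, h2, h3⟩ := (memR j x).mp hx
    refine (memR (j+1) y).mpr ⟨i + 1, by omega, by omega, ?_⟩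
    have : (M ^ i) s x * M x y ≤ (M ^ (i+1)) s y := by
      rw [pow_succ, Matrix.mul_apply]
      refine Finset.single_le_sum (fun z _ => mul_nonneg ((hM.pow i).1 s z) (hM.1 z y))
        (Finset.mem_univ x)
    nlinarith
  have step : ∀ j, 1 ≤ j → ∀ y ∈ R (j+1), y ∈ R j ∨ ∃ x ∈ R j, 0 < M x y := by
    intro j hj y hy
    obtain ⟨i, h1, h2, h3⟩ := (memR (j+1) y).mp hy
    rcases Nat.lt_or_ge i (j+1) with hi | hi
    · exact Or.inl ((memR j y).mpr ⟨i, h1, by omega, h3⟩)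
    · have hij : i = j + 1 := by omega
      subst hij
      rw [pow_succ, Matrix.mul_apply] at h3
      obtain ⟨x, hx⟩ := exists_pos_term
        (fun x => mul_nonneg ((hM.pow j).1 s x) (hM.1 x y)) h3
      have hpos := mul_pos_iff.mp hx
      rcases hpos with ⟨ha, hb⟩ | ⟨ha, hb⟩
      · exact Or.inr ⟨x, (memR j x).mpr ⟨j, by omega, le_refl j, ha⟩, hb⟩
      · exact absurd ((hM.pow j).1 s x) (not_le.mpr ha)
  have stable : ∀ j, 1 ≤ j → R j = R (j+1) → ∀ m, R (j + m) = R j := by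
    intro j hj hstab m
    induction m with
    | zero => rfl
    | succ m ih =>
      refine le_antisymm ?_ (mono (by omega))
      intro y hy
      have : j + (m + 1) = (j + m) + 1 := by omega
      rw [this] at hy
      rcases step (j + m) (by omega) y hy with h | ⟨x, hx, hxy⟩
      · rw [ih] at h; exact h
      · rw [ih] at hx
        have := forward j x y hx hxy
        rw [← hstab] at this; exact this
  have R1ne : (R 1).Nonempty := by
    obtain ⟨y, hy⟩ := exists_pos_term (hM.1 s) (by rw [hM.2 s]; norm_num)
    exact ⟨y, (memR 1 y).mpr ⟨1, le_refl 1, le_refl 1, by simpa using hy⟩⟩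
  have exstab : ∃ j, 1 ≤ j ∧ j ≤ n ∧ R j = R (j+1) := by
    by_contra hc
    push_neg at hc
    have grow : ∀ j, 1 ≤ j → j ≤ n + 1 → j ≤ (R j).card := by
      intro j
      induction j with
      | zero => omega
      | succ j ih =>
        intro _ hj
        rcases Nat.eq_or_lt_of_le (show 1 ≤ j + 1 by omega) with h1 | h1
        · have hj0 : j = 0 := by omega
          subst hj0
          simpa using Finset.card_pos.mpr R1ne
        · have hj1 : 1 ≤ j := by omega
          have hjn : j ≤ n := by omega
          have hne := hc j hj1 hjn
          have hss : R j ⊂ R (j+1) := (mono (by omega)).ssubset_of_ne hne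
          have := Finset.card_lt_card hss
          have := ih hj1 (by omega)
          omega
    have h1 := grow (n+1) (by omega) (le_refl _)
    have h2 : (R (n+1)).card ≤ n := by
      rw [hn]; exact (Finset.card_le_univ _).trans (by simp)
    omega
  obtain ⟨j, hj1, hjn, hstab⟩ := exstab
  have Rsub : ∀ m, R m ⊆ R n := by
    intro m
    rcases Nat.le_total m n with h | h
    · exact mono h
    · have hjm : j ≤ m := le_trans hjn h
      have := stable j hj1 hstab (m - j)
      rw [show j + (m - j) = m by omega] at this
      rw [this]
      exact mono hjn
  obtain ⟨k, hk1, hkpos⟩ := hirr s s'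
  have : s' ∈ R k := (memR k s').mpr ⟨k, hk1, le_refl k, hkpos⟩
  obtain ⟨i, h1, h2, h3⟩ := (memR n s').mp (Rsub k this)
  exact ⟨i, h1, h2, h3⟩

lemma entry_pow_nonneg {M : Matrix S S ℝ} (hM : ∀ s s', 0 ≤ M s s') (k : ℕ) :
    ∀ s s', 0 ≤ (M ^ k) s s' := by
  induction k with
  | zero => intro s s'; rw [pow_zero]; by_cases h : s = s' <;> simp [Matrix.one_apply, h]
  | succ k ih =>
    intro s s'
    rw [pow_succ, Matrix.mul_apply]
    exact Finset.sum_nonneg fun x _ => mul_nonneg (ih s x) (hM x s')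

lemma mulVec_nonneg {M : Matrix S S ℝ} (hM : ∀ s s', 0 ≤ M s s') {v : S → ℝ}
    (hv : ∀ s, 0 ≤ v s) (s : S) : 0 ≤ (M *ᵥ v) s :=
  Finset.sum_nonneg fun x _ => mul_nonneg (hM s x) (hv x)

lemma mulVec_comb (N : Matrix S S ℝ) (f g : S → ℝ) (c : ℝ) (x : S) :
    (N *ᵥ (fun z => f z + c * g z)) x = (N *ᵥ f) x + c * (N *ᵥ g) x := by
  simp only [mulVec_apply', mul_add, Finset.sum_add_distrib, Finset.mul_sum]
  congr 1
  exact Finset.sum_congr rfl fun z _ => by ring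

lemma mulVec_sub' (N : Matrix S S ℝ) (f g : S → ℝ) (x : S) :
    (N *ᵥ (fun z => f z - g z)) x = (N *ᵥ f) x - (N *ᵥ g) x := by
  simp only [mulVec_apply', mul_sub, Finset.sum_sub_distrib]

lemma mulVec_const_mul (N : Matrix S S ℝ) (g : S → ℝ) (c : ℝ) (x : S) :
    (N *ᵥ (fun z => c * g z)) x = c * (N *ᵥ g) x := by
  simp only [mulVec_apply', Finset.mul_sum]
  exact Finset.sum_congr rfl fun z _ => by ring

/-- **Span bound** for discounted values of an irreducible chain. -/
lemma span_bound [Nonempty S] {M : Matrix S S ℝ} (hM : IsStoch M)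
    {δ : ℝ} (hδ0 : 0 < δ) (hδ1 : δ ≤ 1)
    (hhit : ∀ x y : S, ∃ k, 1 ≤ k ∧ k ≤ Fintype.card S ∧ δ ≤ (M ^ k) x y)
    {β : ℝ} (hβ0 : 0 ≤ β) (hβ1 : β < 1)
    {rr v : S → ℝ} (hr0 : ∀ x, 0 ≤ rr x)
    (hveq : ∀ x, v x = rr x + β * (M *ᵥ v) x)
    (hv0 : ∀ x, 0 ≤ v x) (hv1 : ∀ x, v x ≤ 1 / (1 - β)) (s s' : S) :
    v s - v s' ≤ (Fintype.card S : ℝ) / δ := by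
  classical
  set n := Fintype.card S with hn
  have hn1 : 1 ≤ n := Fintype.card_pos
  have h1β : 0 < 1 - β := by linarith
  set w : S → ℝ := fun _ => 1 with hw
  set Q : Matrix S S ℝ := Matrix.of (fun x y => if y = s then 0 else M x y) with hQdef
  set c : S → ℝ := fun x => M x s with hc
  have hQnn : ∀ x y, 0 ≤ Q x y := by
    intro x y; by_cases h : y = s <;> simp [hQdef, h, hM.1 x y]
  have hQpow : ∀ k x y, 0 ≤ (Q ^ k) x y := entry_pow_nonneg hQnn
  have hc0 : ∀ x, 0 ≤ c x := fun x => hM.1 x s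
  have hQw : ∀ x, (Q *ᵥ w) x = 1 - c x := by
    intro x
    rw [mulVec_apply']
    have e : ∀ y, Q x y * w y = M x y - (if y = s then M x y else 0) := by
      intro y; by_cases h : y = s <;> simp [hQdef, hw, h]
    rw [Finset.sum_congr rfl fun y _ => e y, Finset.sum_sub_distrib]
    rw [Finset.sum_ite_eq' Finset.univ s (fun y => M x y)]
    simp [hM.2 x, hc]
  have hdec : ∀ (u : S → ℝ) x, (M *ᵥ u) x = (Q *ᵥ u) x + c x * u s := by
    intro u x
    rw [mulVec_apply', mulVec_apply']
    have e : ∀ y, M x y * u y = Q x y * u y + (if y = s then M x y * u y else 0) := by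
      intro y; by_cases h : y = s <;> simp [hQdef, h]
    rw [Finset.sum_congr rfl fun y _ => e y, Finset.sum_add_distrib]
    rw [Finset.sum_ite_eq' Finset.univ s (fun y => M x y * u y)]
    simp [hc]
  set φ : S → ℝ := fun z => rr z + β * c z * v s with hφ
  have hvrec : ∀ x, v x = φ x + β * (Q *ᵥ v) x := by
    intro x
    rw [hveq x, hdec v x]
    simp only [hφ]; ring
  have hφ0 : ∀ z, 0 ≤ φ z := fun z =>
    add_nonneg (hr0 z) (mul_nonneg (mul_nonneg hβ0 (hc0 z)) (hv0 s))
  have hφlb : ∀ z, β * c z * v s ≤ φ z := fun z => le_add_of_nonneg_left (hr0 z)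
  set W : ℕ → S → ℝ := fun t => (Q ^ t) *ᵥ w with hW
  have hW0 : ∀ x, W 0 x = 1 := by
    intro x
    show ((Q ^ 0) *ᵥ w) x = 1
    rw [pow_zero, Matrix.one_mulVec]
  have hWnn : ∀ t x, 0 ≤ W t x := fun t x => mulVec_nonneg (hQpow t) (by intro z; simp [hw]) x
  have hWsucc : ∀ t x, W (t + 1) x = ((Q ^ t) *ᵥ (Q *ᵥ w)) x := by
    intro t x
    show ((Q ^ (t+1)) *ᵥ w) x = ((Q ^ t) *ᵥ (Q *ᵥ w)) x
    rw [Matrix.mulVec_mulVec, ← pow_succ]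
  have hWsucc' : ∀ t x, W (t + 1) x = (Q *ᵥ (W t)) x := by
    intro t x
    show ((Q ^ (t+1)) *ᵥ w) x = (Q *ᵥ ((Q ^ t) *ᵥ w)) x
    rw [Matrix.mulVec_mulVec, ← pow_succ']
  have hWshift : ∀ (u t : ℕ) (x : S), W (u + t) x = ((Q ^ u) *ᵥ (W t)) x := by
    intro u t x
    show ((Q ^ (u + t)) *ᵥ w) x = ((Q ^ u) *ᵥ ((Q ^ t) *ᵥ w)) x
    rw [Matrix.mulVec_mulVec, ← pow_add]
  have hWdec : ∀ t x, W (t + 1) x ≤ W t x := by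
    intro t x
    rw [hWsucc t x]
    refine mulVec_mono (hQpow t) (fun z => ?_) x
    rw [hQw z]; simp [hw, hc0 z]
  have hWanti : ∀ {t u : ℕ}, t ≤ u → ∀ x, W u x ≤ W t x := by
    intro t u htu x
    induction u with
    | zero => have h0 : t = 0 := by omega
              subst h0; exact le_refl _
    | succ u ih =>
      rcases Nat.eq_or_lt_of_le htu with h | h
      · subst h; exact le_refl _
      · exact (hWdec u x).trans (ih (by omega))
  have hWle1 : ∀ t x, W t x ≤ 1 := by
    intro t x
    have := hWanti (Nat.zero_le t) x
    rwa [hW0 x] at this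
  -- Q^k w + (M^k)·s ≤ 1
  have hkey : ∀ k, 1 ≤ k → ∀ x, W k x + (M ^ k) x s ≤ 1 := by
    intro k
    induction k with
    | zero => omega
    | succ k ih =>
      intro _ x
      rcases Nat.eq_zero_or_pos k with hk0 | hk1
      · subst hk0
        have h1 : W 1 x = 1 - c x := by
          show ((Q ^ 1) *ᵥ w) x = 1 - c x
          rw [pow_one]; exact hQw x
        rw [h1, pow_one]
        simp [hc]
      · have ihx : ∀ y, W k y ≤ 1 - (M ^ k) y s := by
          intro y; have := ih hk1 y; linarith
        have h1 : W (k+1) x = (Q *ᵥ (W k)) x := hWsucc' k x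
        have h2 : (Q *ᵥ (W k)) x ≤ (Q *ᵥ (fun y => 1 - (M ^ k) y s)) x :=
          mulVec_mono hQnn ihx x
        have h3 : (Q *ᵥ (fun y => 1 - (M ^ k) y s)) x
            = (Q *ᵥ w) x - (Q *ᵥ (fun y => (M ^ k) y s)) x := by
          have := mulVec_sub' Q w (fun y => (M ^ k) y s) x
          simpa [hw] using this
        have h4 : (M ^ (k+1)) x s - c x ≤ (Q *ᵥ (fun y => (M ^ k) y s)) x := by
          rw [mulVec_apply']
          have e : ∀ y, Q x y * (M ^ k) y s
              = M x y * (M ^ k) y s - (if y = s then M x y * (M ^ k) y s else 0) := by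
            intro y; by_cases h : y = s <;> simp [hQdef, h]
          rw [Finset.sum_congr rfl fun y _ => e y, Finset.sum_sub_distrib]
          rw [Finset.sum_ite_eq' Finset.univ s (fun y => M x y * (M ^ k) y s)]
          have hpow : (M ^ (k+1)) x s = ∑ y, M x y * (M ^ k) y s := by
            rw [pow_succ', Matrix.mul_apply]
          rw [← hpow]
          simp only [Finset.mem_univ, if_true]
          have hMss : (M ^ k) s s ≤ 1 := by
            have hst := hM.pow k
            calc (M ^ k) s s ≤ ∑ y, (M ^ k) s y :=
              Finset.single_le_sum (fun y _ => hst.1 s y) (Finset.mem_univ s)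
              _ = 1 := hst.2 s
          have hxs : M x s * (M ^ k) s s ≤ M x s * 1 :=
            mul_le_mul_of_nonneg_left hMss (hM.1 x s)
          simp only [hc]
          nlinarith
        have hQwx : (Q *ᵥ w) x = 1 - c x := hQw x
        rw [h1]
        calc (Q *ᵥ W k) x + (M ^ (k+1)) x s
            ≤ ((Q *ᵥ w) x - (Q *ᵥ (fun y => (M ^ k) y s)) x) + (M ^ (k+1)) x s := by
              rw [← h3]; linarith [h2]
          _ ≤ ((1 - c x) - ((M ^ (k+1)) x s - c x)) + (M ^ (k+1)) x s := by
              rw [hQwx]; linarith [h4]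
          _ = 1 := by ring
  have hQN : ∀ x, W n x ≤ 1 - δ := by
    intro x
    obtain ⟨k, hk1, hkn, hkd⟩ := hhit x s
    have h1 := hkey k hk1 x
    have h2 := hWanti hkn x
    linarith
  have hdecay : ∀ j x, W (j * n) x ≤ (1 - δ) ^ j := by
    intro j
    induction j with
    | zero => intro x; simpa using hWle1 0 x
    | succ j ih =>
      intro x
      have e : W ((j+1) * n) x = ((Q ^ (j * n)) *ᵥ (W n)) x := by
        rw [show (j+1)*n = j*n + n by ring]
        exact hWshift (j*n) n x
      rw [e]
      have h1 : ((Q ^ (j * n)) *ᵥ (W n)) x ≤ ((Q ^ (j * n)) *ᵥ (fun _ => (1:ℝ) - δ)) x :=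
        mulVec_mono (hQpow _) hQN x
      have h2 : ((Q ^ (j * n)) *ᵥ (fun _ => (1:ℝ) - δ)) x = (1 - δ) * W (j * n) x := by
        have := mulVec_const_mul (Q ^ (j * n)) w (1 - δ) x
        simpa [hw] using this
      have h3 : (1 - δ) * W (j * n) x ≤ (1 - δ) * (1 - δ) ^ j :=
        mul_le_mul_of_nonneg_left (ih x) (by linarith)
      calc ((Q ^ (j * n)) *ᵥ (W n)) x ≤ (1 - δ) * (1 - δ) ^ j := le_trans (h1.trans_eq h2) h3
        _ = (1 - δ) ^ (j + 1) := by ring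
  set C : ℝ := (n : ℝ) / δ with hC
  have hCδ : C * δ = (n : ℝ) := by
    rw [hC]; field_simp
  have hnC : (n : ℝ) ≤ C := by
    rw [hC, le_div_iff₀ hδ0]
    have h1 : (1:ℝ) ≤ (n:ℝ) := by exact_mod_cast hn1
    nlinarith
  have hC0 : 0 ≤ C := le_trans (by positivity) hnC
  have hGsum : ∀ m x, ∑ t ∈ Finset.range m, W t x ≤ C := by
    intro m
    induction m using Nat.strong_induction_on with
    | _ m ih =>
      intro x
      rcases Nat.le_total m n with hmn | hnm
      · calc ∑ t ∈ Finset.range m, W t x ≤ ∑ _t ∈ Finset.range m, (1:ℝ) :=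
              Finset.sum_le_sum fun t _ => hWle1 t x
          _ = (m : ℝ) := by simp
          _ ≤ (n : ℝ) := by exact_mod_cast hmn
          _ ≤ C := hnC
      · obtain ⟨m', rfl⟩ : ∃ m', m = n + m' := ⟨m - n, by omega⟩
        have hm' : m' < n + m' := by omega
        have e1 : ∑ t ∈ Finset.range (n + m'), W t x
            = ∑ t ∈ Finset.range n, W t x + ∑ t ∈ Finset.range m', W (n + t) x :=
          Finset.sum_range_add (fun t => W t x) n m'
        have e3 : ∑ t ∈ Finset.range m', W (n + t) x
            = ((Q ^ n) *ᵥ (fun y => ∑ t ∈ Finset.range m', W t y)) x := by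
          rw [Finset.sum_congr rfl fun t _ => hWshift n t x]
          simp only [mulVec_apply', Finset.mul_sum]
          rw [Finset.sum_comm]
        have h4 : ((Q ^ n) *ᵥ (fun y => ∑ t ∈ Finset.range m', W t y)) x
            ≤ ((Q ^ n) *ᵥ (fun _ => C)) x :=
          mulVec_mono (hQpow n) (fun y => ih m' hm' y) x
        have h5 : ((Q ^ n) *ᵥ (fun _ => C)) x = C * W n x := by
          have := mulVec_const_mul (Q ^ n) w C x
          simpa [hw] using this
        have h6 : C * W n x ≤ C * (1 - δ) := mul_le_mul_of_nonneg_left (hQN x) hC0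
        have h7 : ∑ t ∈ Finset.range n, W t x ≤ (n:ℝ) := by
          calc ∑ t ∈ Finset.range n, W t x ≤ ∑ _t ∈ Finset.range n, (1:ℝ) :=
                Finset.sum_le_sum fun t _ => hWle1 t x
            _ = (n : ℝ) := by simp
        have halg : (n:ℝ) + C * (1 - δ) ≤ C := by nlinarith [hCδ]
        calc ∑ t ∈ Finset.range (n + m'), W t x
            = ∑ t ∈ Finset.range n, W t x + ∑ t ∈ Finset.range m', W (n + t) x := e1
          _ ≤ (n:ℝ) + C * (1 - δ) := by rw [e3]; linarith [h4.trans_eq h5 |>.trans h6]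
          _ ≤ C := halg
  -- unrolled representation
  have hunroll : ∀ m x, v x
      = ∑ t ∈ Finset.range m, β ^ t * (((Q ^ t) *ᵥ φ) x) + β ^ m * (((Q ^ m) *ᵥ v) x) := by
    intro m
    induction m with
    | zero => intro x; simp [Matrix.one_mulVec]
    | succ m ih =>
      intro x
      have hveq' : v = fun z => φ z + β * (Q *ᵥ v) z := funext hvrec
      have step : ((Q ^ m) *ᵥ v) x = ((Q ^ m) *ᵥ φ) x + β * (((Q ^ (m+1)) *ᵥ v) x) := by
        calc ((Q ^ m) *ᵥ v) x = ((Q ^ m) *ᵥ (fun z => φ z + β * (Q *ᵥ v) z)) x := by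
              conv_lhs => rw [hveq']
          _ = ((Q ^ m) *ᵥ φ) x + β * (((Q ^ m) *ᵥ (Q *ᵥ v)) x) := mulVec_comb _ _ _ _ _
          _ = ((Q ^ m) *ᵥ φ) x + β * (((Q ^ (m+1)) *ᵥ v) x) := by
              rw [Matrix.mulVec_mulVec, ← pow_succ]
      rw [Finset.sum_range_succ]
      rw [ih x, step]
      ring
  -- lower bound on v s'
  have hTm : ∀ m, (∑ t ∈ Finset.range m, β ^ (t+1) * (((Q ^ t) *ᵥ c) s')) * v s ≤ v s' := by
    intro m
    have h1 : ∀ t, β ^ (t+1) * (((Q ^ t) *ᵥ c) s') * v s ≤ β ^ t * (((Q ^ t) *ᵥ φ) s') := by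
      intro t
      have h2 : ((Q ^ t) *ᵥ (fun z => (β * v s) * c z)) s' ≤ ((Q ^ t) *ᵥ φ) s' := by
        refine mulVec_mono (hQpow t) (fun z => ?_) s'
        have := hφlb z; nlinarith [hφlb z]
      have h3 : ((Q ^ t) *ᵥ (fun z => (β * v s) * c z)) s' = (β * v s) * (((Q ^ t) *ᵥ c) s') :=
        mulVec_const_mul _ _ _ _
      have hb : 0 ≤ β ^ t := pow_nonneg hβ0 t
      calc β ^ (t+1) * (((Q ^ t) *ᵥ c) s') * v s
          = β ^ t * ((β * v s) * (((Q ^ t) *ᵥ c) s')) := by ring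
        _ = β ^ t * (((Q ^ t) *ᵥ (fun z => (β * v s) * c z)) s') := by rw [h3]
        _ ≤ β ^ t * (((Q ^ t) *ᵥ φ) s') := mul_le_mul_of_nonneg_left h2 hb
    have hsum : ∑ t ∈ Finset.range m, β ^ (t+1) * (((Q ^ t) *ᵥ c) s') * v s
        ≤ ∑ t ∈ Finset.range m, β ^ t * (((Q ^ t) *ᵥ φ) s') :=
      Finset.sum_le_sum fun t _ => h1 t
    have htail : 0 ≤ β ^ m * (((Q ^ m) *ᵥ v) s') :=
      mul_nonneg (pow_nonneg hβ0 m) (mulVec_nonneg (hQpow m) hv0 s')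
    rw [Finset.sum_mul]
    rw [hunroll m s']
    linarith
  -- (Q^t c) s' as difference
  set q : ℕ → ℝ := fun t => W t s' with hq
  have hqc : ∀ t, ((Q ^ t) *ᵥ c) s' = q t - q (t+1) := by
    intro t
    have e1 : c = fun z => w z - (Q *ᵥ w) z := by
      funext z; rw [hQw z]; simp [hw]
    have e2 : ((Q ^ t) *ᵥ c) s' = ((Q ^ t) *ᵥ w) s' - ((Q ^ t) *ᵥ (Q *ᵥ w)) s' := by
      conv_lhs => rw [e1]
      exact mulVec_sub' _ _ _ _
    rw [e2]
    show ((Q ^ t) *ᵥ w) s' - ((Q ^ t) *ᵥ (Q *ᵥ w)) s' = W t s' - W (t+1) s'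
    rw [hWsucc t s']
  have hqd : ∀ t, 0 ≤ q t - q (t+1) := fun t => sub_nonneg.mpr (hWdec t s')
  have hq0 : q 0 = 1 := hW0 s'
  have habel : ∀ m, ∑ t ∈ Finset.range m, ((t:ℝ)+1) * (q t - q (t+1))
      = ∑ t ∈ Finset.range m, q t - m * q m := by
    intro m
    induction m with
    | zero => simp
    | succ m ih =>
      rw [Finset.sum_range_succ, Finset.sum_range_succ, ih]
      push_cast
      ring
  have htel : ∀ m, ∑ t ∈ Finset.range m, (q t - q (t+1)) = 1 - q m := by
    intro m
    rw [Finset.sum_range_sub' q m, hq0]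
  have hbern : ∀ t : ℕ, 1 - ((t:ℝ)+1) * (1 - β) ≤ β ^ (t+1) := by
    intro t
    have h := one_add_mul_le_pow (a := β - 1) (by linarith) (t+1)
    have e : (1 : ℝ) + (β - 1) = β := by ring
    rw [e] at h
    push_cast at h
    linarith
  have main : ∀ j : ℕ, v s - v s' ≤ C + v s * (1-δ) ^ j := by
    intro j
    set m := j * n with hm
    have hT := hTm m
    have hq_sum : ∑ t ∈ Finset.range m, q t ≤ C := hGsum m s'
    have h1 : ∀ t : ℕ, (1 - ((t:ℝ)+1) * (1 - β)) * (q t - q (t+1))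
        ≤ β ^ (t+1) * (((Q ^ t) *ᵥ c) s') := by
      intro t
      rw [hqc t]
      exact mul_le_mul_of_nonneg_right (hbern t) (hqd t)
    have h2 : ∑ t ∈ Finset.range m, (1 - ((t:ℝ)+1) * (1 - β)) * (q t - q (t+1))
        = (1 - q m) - (1-β) * (∑ t ∈ Finset.range m, q t - m * q m) := by
      have e : ∀ t : ℕ, (1 - ((t:ℝ)+1) * (1 - β)) * (q t - q (t+1))
          = (q t - q (t+1)) - (1-β) * (((t:ℝ)+1) * (q t - q (t+1))) := by intro t; ring
      rw [Finset.sum_congr rfl fun t _ => e t, Finset.sum_sub_distrib, htel m,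
        ← Finset.mul_sum, habel m]
    have hmq : 0 ≤ (m:ℝ) * q m := mul_nonneg (Nat.cast_nonneg m) (hWnn m s')
    have hTbound : 1 - q m - (1-β) * C
        ≤ ∑ t ∈ Finset.range m, β ^ (t+1) * (((Q ^ t) *ᵥ c) s') := by
      have h3 : 1 - q m - (1-β) * C
          ≤ (1 - q m) - (1-β) * (∑ t ∈ Finset.range m, q t - m * q m) := by nlinarith
      calc 1 - q m - (1-β) * C
          ≤ (1 - q m) - (1-β) * (∑ t ∈ Finset.range m, q t - m * q m) := h3
        _ = ∑ t ∈ Finset.range m, (1 - ((t:ℝ)+1) * (1 - β)) * (q t - q (t+1)) := h2.symm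
        _ ≤ ∑ t ∈ Finset.range m, β ^ (t+1) * (((Q ^ t) *ᵥ c) s') :=
            Finset.sum_le_sum fun t _ => h1 t
    have hvs0 := hv0 s
    have hkey2 : (1 - q m - (1-β) * C) * v s ≤ v s' :=
      le_trans (mul_le_mul_of_nonneg_right hTbound hvs0) hT
    have hqm : q m ≤ (1-δ) ^ j := hdecay j s'
    have hvsC : (1-β) * v s ≤ 1 := by
      have h := hv1 s
      rw [le_div_iff₀ h1β] at h
      linarith
    have hprod1 : v s * q m ≤ v s * (1-δ) ^ j := mul_le_mul_of_nonneg_left hqm hvs0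
    have hprod2 : C * ((1-β) * v s) ≤ C * 1 := mul_le_mul_of_nonneg_left hvsC hC0
    nlinarith
  have htend : Tendsto (fun j : ℕ => C + v s * (1-δ) ^ j) atTop (nhds (C + v s * 0)) :=
    tendsto_const_nhds.add (tendsto_const_nhds.mul
      (tendsto_pow_atTop_nhds_zero_of_lt_one (by linarith) (by linarith)))
  have hfin := ge_of_tendsto htend (Filter.Eventually.of_forall main)
  simpa using hfin


variable [Nonempty S]
lemma cont_sup' {ι X : Type*} [TopologicalSpace X] {t : Finset ι} (ht : t.Nonempty)
    {g : ι → X → ℝ} (hg : ∀ i, Continuous (g i)) :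
    Continuous fun x => t.sup' ht fun i => g i x := by
  induction ht using Finset.Nonempty.cons_induction with
  | singleton a => simpa using hg a
  | cons a s ha hs ih =>
    have e : (fun x => (Finset.cons a s ha).sup' (Finset.cons_nonempty ha) fun i => g i x)
        = fun x => max (g a x) (s.sup' hs fun i => g i x) := by
      funext x; rw [Finset.sup'_cons]
    rw [e]; exact (hg a).max ih

lemma cont_inf' {ι X : Type*} [TopologicalSpace X] {t : Finset ι} (ht : t.Nonempty)
    {g : ι → X → ℝ} (hg : ∀ i, Continuous (g i)) :
    Continuous fun x => t.inf' ht fun i => g i x := by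
  induction ht using Finset.Nonempty.cons_induction with
  | singleton a => simpa using hg a
  | cons a s ha hs ih =>
    have e : (fun x => (Finset.cons a s ha).inf' (Finset.cons_nonempty ha) fun i => g i x)
        = fun x => min (g a x) (s.inf' hs fun i => g i x) := by
      funext x; rw [Finset.inf'_cons]
    rw [e]; exact (hg a).min ih

lemma cont_pow_entry (k : ℕ) (s s' : S) :
    Continuous fun M : Matrix S S ℝ => (M ^ k) s s' := by
  induction k generalizing s s' with
  | zero => simp only [pow_zero]; exact continuous_const
  | succ k ih =>
    have e : (fun M : Matrix S S ℝ => (M ^ (k+1)) s s')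
        = fun M => ∑ x, (M ^ k) s x * M x s' := by
      funext M; rw [pow_succ, Matrix.mul_apply]
    rw [e]
    exact continuous_finset_sum _ fun x _ =>
      (ih s x).mul (((continuous_apply s').comp (continuous_apply x)))

variable [Nonempty S] {A : Type*} [Fintype A] [Nonempty A]

lemma exists_delta (U : S → A → Set (S → ℝ))
    (hU : ∀ s a, (U s a).Nonempty ∧ IsCompact (U s a) ∧ Convex ℝ (U s a) ∧
      U s a ⊆ stdSimplex ℝ S)
    (hirr : Assump1 U) :
    ∃ δ : ℝ, 0 < δ ∧ δ ≤ 1 ∧ ∀ M : Matrix S S ℝ, (∀ s, ∃ a, (fun s' => M s s') ∈ U s a) →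
      ∀ s s', ∃ k, 1 ≤ k ∧ k ≤ Fintype.card S ∧ δ ≤ (M ^ k) s s' := by
  classical
  set n := Fintype.card S with hn
  have hn1 : 1 ≤ n := Fintype.card_pos
  have hIcc : (Finset.Icc 1 n).Nonempty := ⟨1, by simp [hn1]⟩
  have hSS : (Finset.univ : Finset (S × S)).Nonempty := Finset.univ_nonempty
  set K : Set (Matrix S S ℝ) := {M | ∀ s, (fun s' => M s s') ∈ ⋃ a, U s a} with hK
  have hKc : IsCompact K := by
    have e : K = Set.univ.pi (fun s => ⋃ a, U s a) := by
      ext M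
      constructor
      · intro h
        exact Set.mem_pi.mpr fun s _ => h s
      · intro h s
        exact Set.mem_pi.mp h s (Set.mem_univ s)
    rw [e]
    exact isCompact_univ_pi fun s => isCompact_iUnion fun a => (hU s a).2.1
  have hKne : K.Nonempty := by
    obtain ⟨a0⟩ := ‹Nonempty A›
    refine ⟨Matrix.of fun s => (hU s a0).1.choose, fun s => ?_⟩
    exact Set.mem_iUnion.mpr ⟨a0, (hU s a0).1.choose_spec⟩
  have hKstoch : ∀ M ∈ K, IsStoch M := by
    intro M hM
    constructor
    · intro s s'
      obtain ⟨a, ha⟩ := Set.mem_iUnion.mp (hM s)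
      exact ((hU s a).2.2.2 ha).1 s'
    · intro s
      obtain ⟨a, ha⟩ := Set.mem_iUnion.mp (hM s)
      exact ((hU s a).2.2.2 ha).2
  have hKirr : ∀ M ∈ K, ∀ s s' : S, ∃ k, 1 ≤ k ∧ 0 < (M ^ k) s s' := by
    intro M hM
    have hch : ∀ s, ∃ a, (fun s' => M s s') ∈ U s a := fun s => Set.mem_iUnion.mp (hM s)
    choose d hd using hch
    set P : S → A → S → ℝ := fun s a => if a = d s then (fun s' => M s s') else (hU s a).1.choose
      with hP
    have hPU : ∀ s a, P s a ∈ U s a := by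
      intro s a
      by_cases h : a = d s
      · subst h; simpa [hP] using hd s
      · simpa [hP, h] using (hU s a).1.choose_spec
    have := hirr d P hPU
    have e : (Matrix.of fun s s' => P s (d s) s') = M := by
      ext s s'; simp [hP]
    rw [e] at this
    exact this
  set f : Matrix S S ℝ → ℝ := fun M =>
    Finset.univ.inf' hSS fun p : S × S =>
      (Finset.Icc 1 n).sup' hIcc fun k => (M ^ k) p.1 p.2 with hf
  have hfc : Continuous f :=
    cont_inf' hSS fun p => cont_sup' hIcc fun k => cont_pow_entry k p.1 p.2
  obtain ⟨M0, hM0K, hmin⟩ := hKc.exists_isMinOn hKne hfc.continuousOn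
  refine ⟨f M0, ?_, ?_, ?_⟩
  · rw [hf]
    refine Finset.lt_inf'_iff _ |>.mpr ?_
    rintro ⟨s, s'⟩ -
    obtain ⟨k, hk1, hkn, hkpos⟩ := reach_short (hKstoch M0 hM0K) (hKirr M0 hM0K) s s'
    refine lt_of_lt_of_le hkpos ?_
    exact Finset.le_sup' (fun k => (M0 ^ k) (s, s').1 (s, s').2) (Finset.mem_Icc.mpr ⟨hk1, hkn⟩)
  · obtain ⟨s⟩ := ‹Nonempty S›
    calc f M0 ≤ (Finset.Icc 1 n).sup' hIcc fun k => (M0 ^ k) s s :=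
          Finset.inf'_le _ (Finset.mem_univ (s, s))
      _ ≤ 1 := by
          refine Finset.sup'_le _ _ fun k _ => ?_
          have hst := (hKstoch M0 hM0K).pow k
          calc (M0 ^ k) s s ≤ ∑ s', (M0 ^ k) s s' :=
                Finset.single_le_sum (fun x _ => hst.1 s x) (Finset.mem_univ s)
            _ = 1 := hst.2 s
  · intro M hMrow s s'
    have hMK : M ∈ K := fun s => Set.mem_iUnion.mpr (hMrow s)
    have h1 : f M0 ≤ (Finset.Icc 1 n).sup' hIcc fun k => (M ^ k) s s' :=
      (hmin hMK).trans (Finset.inf'_le _ (Finset.mem_univ (s, s')))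
    obtain ⟨k, hk, he⟩ := Finset.exists_mem_eq_sup' hIcc fun k => (M ^ k) s s'
    obtain ⟨hk1, hkn⟩ := Finset.mem_Icc.mp hk
    exact ⟨k, hk1, hkn, by rw [he] at h1; exact h1⟩


lemma mulVec_one' {M : Matrix S S ℝ} (hM : IsStoch M) (x : S) :
    (M *ᵥ (fun _ => (1:ℝ))) x = 1 := by
  simp only [mulVec_apply', mul_one]
  exact hM.2 x

lemma mulVec_sum (N : Matrix S S ℝ) (m : ℕ) (F : ℕ → S → ℝ) (x : S) :
    (N *ᵥ (fun y => ∑ t ∈ Finset.range m, F t y)) x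
      = ∑ t ∈ Finset.range m, (N *ᵥ F t) x := by
  simp only [mulVec_apply', Finset.mul_sum]
  rw [Finset.sum_comm]

lemma avg_liminf_ge {N : Matrix S S ℝ} (hN : IsStoch N) {rp hh : S → ℝ} {g Hb : ℝ}
    (hrp0 : ∀ x, 0 ≤ rp x) (hrp1 : ∀ x, rp x ≤ 1)
    (hH : ∀ x, |hh x| ≤ Hb) (hHb0 : 0 ≤ Hb)
    (hkey : ∀ x, hh x + g ≤ rp x + (N *ᵥ hh) x) (s : S) :
    g ≤ Filter.liminf
      (fun m : ℕ => (∑ t ∈ Finset.range m, ((N ^ t) *ᵥ rp) s) / m) Filter.atTop := by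
  classical
  have hub : ∀ x m, ((N ^ m) *ᵥ hh) x ≤ Hb :=
    fun x m => mulVec_le (hN.pow m) (fun y => le_of_abs_le (hH y)) x
  have hiter : ∀ (m : ℕ) (x : S), (m:ℝ) * g + hh x - ((N ^ m) *ᵥ hh) x
      ≤ ∑ t ∈ Finset.range m, ((N ^ t) *ᵥ rp) x := by
    intro m
    induction m with
    | zero => intro x; simp [Matrix.one_mulVec]
    | succ m ih =>
      intro x
      have e0 : ∑ t ∈ Finset.range (m+1), ((N ^ t) *ᵥ rp) x
          = ∑ t ∈ Finset.range m, ((N ^ (t+1)) *ᵥ rp) x + rp x := by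
        rw [Finset.sum_range_succ' (fun t => ((N ^ t) *ᵥ rp) x) m]
        simp [Matrix.one_mulVec]
      have e1 : ∑ t ∈ Finset.range m, ((N ^ (t+1)) *ᵥ rp) x
          = (N *ᵥ (fun y => ∑ t ∈ Finset.range m, ((N ^ t) *ᵥ rp) y)) x := by
        rw [mulVec_sum N m (fun t => (N ^ t) *ᵥ rp) x]
        refine Finset.sum_congr rfl fun t _ => ?_
        rw [Matrix.mulVec_mulVec, ← pow_succ']
      have h2 : (N *ᵥ (fun y => (m:ℝ) * g + hh y - ((N ^ m) *ᵥ hh) y)) x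
          ≤ (N *ᵥ (fun y => ∑ t ∈ Finset.range m, ((N ^ t) *ᵥ rp) y)) x :=
        mulVec_mono hN.1 ih x
      have h3 : (N *ᵥ (fun y => (m:ℝ) * g + hh y - ((N ^ m) *ᵥ hh) y)) x
          = (m:ℝ) * g + (N *ᵥ hh) x - ((N ^ (m+1)) *ᵥ hh) x := by
        have e2 : (fun y => (m:ℝ) * g + hh y - ((N ^ m) *ᵥ hh) y)
            = fun y => (hh y - ((N ^ m) *ᵥ hh) y) + ((m:ℝ) * g) * (fun _ => (1:ℝ)) y := by
          funext y; simp; ring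
        rw [e2, mulVec_comb N (fun y => hh y - ((N ^ m) *ᵥ hh) y) (fun _ => 1) ((m:ℝ)*g) x,
          mulVec_one' hN x, mulVec_sub' N hh ((N ^ m) *ᵥ hh) x, Matrix.mulVec_mulVec,
          ← pow_succ']
        ring
      have h4 := hkey x
      push_cast
      calc ((m:ℝ)+1) * g + hh x - ((N ^ (m+1)) *ᵥ hh) x
          = (hh x + g) + ((m:ℝ) * g + (N *ᵥ hh) x - ((N ^ (m+1)) *ᵥ hh) x)
            - (N *ᵥ hh) x := by ring
        _ ≤ rp x + ((m:ℝ) * g + (N *ᵥ hh) x - ((N ^ (m+1)) *ᵥ hh) x) := by linarith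
        _ = rp x + (N *ᵥ (fun y => (m:ℝ) * g + hh y - ((N ^ m) *ᵥ hh) y)) x := by rw [h3]
        _ ≤ rp x + (N *ᵥ (fun y => ∑ t ∈ Finset.range m, ((N ^ t) *ᵥ rp) y)) x := by
            linarith
        _ = ∑ t ∈ Finset.range (m+1), ((N ^ t) *ᵥ rp) x := by rw [← e1, e0]; ring
  set u : ℕ → ℝ := fun m => (∑ t ∈ Finset.range m, ((N ^ t) *ᵥ rp) s) / m with hu
  set v : ℕ → ℝ := fun m => g - 2 * Hb / m with hv
  have hu1 : ∀ m, u m ≤ 1 := by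
    intro m
    rcases Nat.eq_zero_or_pos m with h0 | h1
    · subst h0; simp [hu]
    · have hm0 : (0:ℝ) < m := by exact_mod_cast h1
      simp only [hu]
      rw [div_le_one hm0]
      calc ∑ t ∈ Finset.range m, ((N ^ t) *ᵥ rp) s ≤ ∑ _t ∈ Finset.range m, (1:ℝ) :=
            Finset.sum_le_sum fun t _ => mulVec_le (hN.pow t) hrp1 s
        _ = (m:ℝ) := by simp
  have hev : ∀ᶠ m : ℕ in Filter.atTop, v m ≤ u m := by
    refine Filter.eventually_atTop.mpr ⟨1, fun m hm => ?_⟩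
    have hm0 : (0:ℝ) < (m:ℝ) := by exact_mod_cast hm
    have h5 := hiter m s
    have h6 : (m:ℝ) * g - 2 * Hb ≤ ∑ t ∈ Finset.range m, ((N ^ t) *ᵥ rp) s := by
      have h7 : -Hb ≤ hh s := neg_le_of_abs_le (hH s)
      have h8 := hub s m
      linarith
    have e : v m = ((m:ℝ) * g - 2 * Hb) / m := by
      simp only [hv]
      rw [sub_div, mul_div_cancel_left₀ g (ne_of_gt hm0)]
    rw [e]
    simp only [hu]
    gcongr
  have hvt : Tendsto v atTop (nhds g) := by
    have h1 : Tendsto (fun m : ℕ => 2 * Hb / (m:ℝ)) atTop (nhds 0) :=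
      tendsto_const_div_atTop_nhds_zero_nat (2 * Hb)
    have h2 : Tendsto (fun m : ℕ => g - 2 * Hb / (m:ℝ)) atTop (nhds (g - 0)) :=
      Filter.Tendsto.sub tendsto_const_nhds h1
    simpa using h2
  have hbu : Filter.IsBoundedUnder (· ≥ ·) Filter.atTop v := by
    refine Filter.isBoundedUnder_of ⟨g - 2 * Hb, fun m => ?_⟩
    rcases Nat.eq_zero_or_pos m with h0 | h1
    · subst h0; simp [hv]; positivity
    · have : 2 * Hb / (m:ℝ) ≤ 2 * Hb :=
        div_le_self (by positivity) (by exact_mod_cast h1)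
      simp only [hv, ge_iff_le]
      linarith
  have hcu : Filter.IsCoboundedUnder (· ≥ ·) Filter.atTop u :=
    (Filter.isBoundedUnder_of ⟨1, fun m => hu1 m⟩ :
      Filter.IsBoundedUnder (· ≤ ·) Filter.atTop u).isCoboundedUnder_ge
  calc g = Filter.liminf v Filter.atTop := (hvt.liminf_eq).symm
    _ ≤ Filter.liminf u Filter.atTop := Filter.liminf_le_liminf hev hbu hcu

lemma avg_liminf_le {N : Matrix S S ℝ} (hN : IsStoch N) {rp hh : S → ℝ} {g Hb : ℝ}
    (hrp0 : ∀ x, 0 ≤ rp x) (hrp1 : ∀ x, rp x ≤ 1)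
    (hH : ∀ x, |hh x| ≤ Hb) (hHb0 : 0 ≤ Hb)
    (hkey : ∀ x, rp x + (N *ᵥ hh) x ≤ hh x + g) (s : S) :
    Filter.liminf
      (fun m : ℕ => (∑ t ∈ Finset.range m, ((N ^ t) *ᵥ rp) s) / m) Filter.atTop ≤ g := by
  classical
  have hlb : ∀ x m, -Hb ≤ ((N ^ m) *ᵥ hh) x :=
    fun x m => le_mulVec (hN.pow m) (fun y => neg_le_of_abs_le (hH y)) x
  have hiter : ∀ (m : ℕ) (x : S), ∑ t ∈ Finset.range m, ((N ^ t) *ᵥ rp) x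
      ≤ (m:ℝ) * g + hh x - ((N ^ m) *ᵥ hh) x := by
    intro m
    induction m with
    | zero => intro x; simp [Matrix.one_mulVec]
    | succ m ih =>
      intro x
      have e0 : ∑ t ∈ Finset.range (m+1), ((N ^ t) *ᵥ rp) x
          = ∑ t ∈ Finset.range m, ((N ^ (t+1)) *ᵥ rp) x + rp x := by
        rw [Finset.sum_range_succ' (fun t => ((N ^ t) *ᵥ rp) x) m]
        simp [Matrix.one_mulVec]
      have e1 : ∑ t ∈ Finset.range m, ((N ^ (t+1)) *ᵥ rp) x
          = (N *ᵥ (fun y => ∑ t ∈ Finset.range m, ((N ^ t) *ᵥ rp) y)) x := by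
        rw [mulVec_sum N m (fun t => (N ^ t) *ᵥ rp) x]
        refine Finset.sum_congr rfl fun t _ => ?_
        rw [Matrix.mulVec_mulVec, ← pow_succ']
      have h2 : (N *ᵥ (fun y => ∑ t ∈ Finset.range m, ((N ^ t) *ᵥ rp) y)) x
          ≤ (N *ᵥ (fun y => (m:ℝ) * g + hh y - ((N ^ m) *ᵥ hh) y)) x :=
        mulVec_mono hN.1 ih x
      have h3 : (N *ᵥ (fun y => (m:ℝ) * g + hh y - ((N ^ m) *ᵥ hh) y)) x
          = (m:ℝ) * g + (N *ᵥ hh) x - ((N ^ (m+1)) *ᵥ hh) x := by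
        have e2 : (fun y => (m:ℝ) * g + hh y - ((N ^ m) *ᵥ hh) y)
            = fun y => (hh y - ((N ^ m) *ᵥ hh) y) + ((m:ℝ) * g) * (fun _ => (1:ℝ)) y := by
          funext y; simp; ring
        rw [e2, mulVec_comb N (fun y => hh y - ((N ^ m) *ᵥ hh) y) (fun _ => 1) ((m:ℝ)*g) x,
          mulVec_one' hN x, mulVec_sub' N hh ((N ^ m) *ᵥ hh) x, Matrix.mulVec_mulVec,
          ← pow_succ']
        ring
      have h4 := hkey x
      push_cast
      calc ∑ t ∈ Finset.range (m+1), ((N ^ t) *ᵥ rp) x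
          = ∑ t ∈ Finset.range m, ((N ^ (t+1)) *ᵥ rp) x + rp x := e0
        _ = (N *ᵥ (fun y => ∑ t ∈ Finset.range m, ((N ^ t) *ᵥ rp) y)) x + rp x := by
            rw [e1]
        _ ≤ (N *ᵥ (fun y => (m:ℝ) * g + hh y - ((N ^ m) *ᵥ hh) y)) x + rp x := by
            linarith
        _ = (m:ℝ) * g + (N *ᵥ hh) x - ((N ^ (m+1)) *ᵥ hh) x + rp x := by rw [h3]
        _ ≤ ((m:ℝ)+1) * g + hh x - ((N ^ (m+1)) *ᵥ hh) x := by linarith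
  set u : ℕ → ℝ := fun m => (∑ t ∈ Finset.range m, ((N ^ t) *ᵥ rp) s) / m with hu
  set v : ℕ → ℝ := fun m => g + 2 * Hb / m with hv
  have hu0 : ∀ m, 0 ≤ u m := fun m => div_nonneg
    (Finset.sum_nonneg fun t _ => mulVec_nonneg (hN.pow t).1 hrp0 s) (Nat.cast_nonneg m)
  have hev : ∀ᶠ m : ℕ in Filter.atTop, u m ≤ v m := by
    refine Filter.eventually_atTop.mpr ⟨1, fun m hm => ?_⟩
    have hm0 : (0:ℝ) < (m:ℝ) := by exact_mod_cast hm
    have h5 := hiter m s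
    have h6 : ∑ t ∈ Finset.range m, ((N ^ t) *ᵥ rp) s ≤ (m:ℝ) * g + 2 * Hb := by
      have h7 : hh s ≤ Hb := le_of_abs_le (hH s)
      have h8 := hlb s m
      linarith
    have e : v m = ((m:ℝ) * g + 2 * Hb) / m := by
      simp only [hv]
      rw [add_div, mul_div_cancel_left₀ g (ne_of_gt hm0)]
    rw [e]
    simp only [hu]
    gcongr
  have hvt : Tendsto v atTop (nhds g) := by
    have h1 : Tendsto (fun m : ℕ => 2 * Hb / (m:ℝ)) atTop (nhds 0) :=
      tendsto_const_div_atTop_nhds_zero_nat (2 * Hb)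
    have h2 : Tendsto (fun m : ℕ => g + 2 * Hb / (m:ℝ)) atTop (nhds (g + 0)) :=
      Filter.Tendsto.add tendsto_const_nhds h1
    simpa using h2
  have hbu : Filter.IsBoundedUnder (· ≥ ·) Filter.atTop u :=
    Filter.isBoundedUnder_of ⟨0, fun m => hu0 m⟩
  have hcv : Filter.IsCoboundedUnder (· ≥ ·) Filter.atTop v := by
    refine (Filter.isBoundedUnder_of ⟨g + 2 * Hb, fun m => ?_⟩ :
      Filter.IsBoundedUnder (· ≤ ·) Filter.atTop v).isCoboundedUnder_ge
    rcases Nat.eq_zero_or_pos m with h0 | h1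
    · subst h0; simp [hv]; positivity
    · have : 2 * Hb / (m:ℝ) ≤ 2 * Hb :=
        div_le_self (by positivity) (by exact_mod_cast h1)
      simp only [hv]
      linarith
  calc Filter.liminf u Filter.atTop ≤ Filter.liminf v Filter.atTop :=
        Filter.liminf_le_liminf hev hbu hcv
    _ = g := hvt.liminf_eq

end Mat

section Main
variable {S A : Type*} [Fintype S] [DecidableEq S] [Nonempty S] [Fintype A] [Nonempty A]

lemma ciSup_add_const (F : A → ℝ) (c : ℝ) : (⨆ a, (F a + c)) = (⨆ a, F a) + c := by
  obtain ⟨a0, ha0, hmax⟩ := exists_ciSup_eq F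
  refine le_antisymm (ciSup_le fun a => add_le_add_left (le_ciSup' F a) c) ?_
  rw [ha0]
  exact le_ciSup' (fun a => F a + c) a0

lemma bellman_exists (r : S → A → ℝ) (hr : ∀ s a, r s a ∈ Set.Icc (0:ℝ) 1)
    (U : S → A → Set (S → ℝ))
    (hU : ∀ s a, (U s a).Nonempty ∧ IsCompact (U s a) ∧ Convex ℝ (U s a) ∧
      U s a ⊆ stdSimplex ℝ S)
    (hirr : Assump1 U) :
    ∃ (g : ℝ) (h : S → ℝ), ∀ s, h s = ⨆ a : A, (r s a - g + suppF (U s a) h) := by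
  classical
  obtain ⟨δ, hδ0, hδ1, hδ⟩ := exists_delta U hU hirr
  set C : ℝ := (Fintype.card S : ℝ) / δ with hC
  have hU1 : ∀ s a, (U s a).Nonempty := fun s a => (hU s a).1
  have hU2 : ∀ s a, IsCompact (U s a) := fun s a => (hU s a).2.1
  have hUs : ∀ s a, U s a ⊆ stdSimplex ℝ S := fun s a => (hU s a).2.2.2
  set T : ℝ → (S → ℝ) → (S → ℝ) := fun β V s => ⨆ a, (r s a + β * suppF (U s a) V) with hT
  have hcontract : ∀ β : ℝ, 0 ≤ β → ∀ V W : S → ℝ,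
      dist (T β V) (T β W) ≤ β * dist V W := by
    intro β hβ0 V W
    rw [dist_pi_le_iff (by positivity)]
    intro s
    rw [Real.dist_eq]
    refine ciSup_dist_le fun a => ?_
    have h1 : |suppF (U s a) V - suppF (U s a) W| ≤ dist V W :=
      suppF_dist_le (hU1 s a) (hU2 s a) (hUs s a) (fun x => by
        rw [← Real.dist_eq]; exact dist_le_pi_dist V W x)
    calc |(r s a + β * suppF (U s a) V) - (r s a + β * suppF (U s a) W)|
        = β * |suppF (U s a) V - suppF (U s a) W| := by
          rw [show (r s a + β * suppF (U s a) V) - (r s a + β * suppF (U s a) W)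
            = β * (suppF (U s a) V - suppF (U s a) W) by ring, abs_mul, abs_of_nonneg hβ0]
      _ ≤ β * dist V W := mul_le_mul_of_nonneg_left h1 hβ0
  have hfix : ∀ β : ℝ, 0 ≤ β → β < 1 → ∃ V : S → ℝ,
      (∀ s, V s = ⨆ a, (r s a + β * suppF (U s a) V)) ∧
      (∀ s, 0 ≤ V s) ∧ (∀ s, V s ≤ 1 / (1 - β)) := by
    intro β hβ0 hβ1
    have hK : (Real.toNNReal β : ℝ) = β := Real.coe_toNNReal β hβ0
    have hlip : LipschitzWith (Real.toNNReal β) (T β) :=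
      LipschitzWith.of_dist_le_mul (fun V W => by rw [hK]; exact hcontract β hβ0 V W)
    have hcw : ContractingWith (Real.toNNReal β) (T β) := by
      constructor
      · rw [show (1 : NNReal) = Real.toNNReal 1 by simp]
        exact (Real.toNNReal_lt_toNNReal_iff (by norm_num)).mpr hβ1
      · exact hlip
    set V := ContractingWith.fixedPoint (T β) hcw with hV
    have hfp : T β V = V := hcw.fixedPoint_isFixedPt
    have heq : ∀ s, V s = ⨆ a, (r s a + β * suppF (U s a) V) := by
      intro s; conv_lhs => rw [← hfp]
    have h1β : (0:ℝ) < 1 - β := by linarith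
    have hlow : ∀ s, 0 ≤ V s := by
      obtain ⟨sm, hsm⟩ := Finite.exists_min V
      have key : β * V sm ≤ V sm := by
        conv_rhs => rw [heq sm]
        obtain ⟨a0⟩ := ‹Nonempty A›
        have h3 : V sm ≤ suppF (U sm a0) V := le_suppF (hU1 _ _) (hUs _ _) hsm
        have h2 : β * V sm ≤ r sm a0 + β * suppF (U sm a0) V := by
          nlinarith [(hr sm a0).1]
        exact le_trans h2 (le_ciSup' (fun a => r sm a + β * suppF (U sm a) V) a0)
      intro s
      have h4 : 0 ≤ V sm := by nlinarith
      exact le_trans h4 (hsm s)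
    have hupp : ∀ s, V s ≤ 1 / (1 - β) := by
      obtain ⟨sM, hsM⟩ := Finite.exists_max V
      intro s
      refine le_trans (hsM s) ?_
      have key : V sM ≤ 1 + β * V sM := by
        conv_lhs => rw [heq sM]
        refine ciSup_le fun a => ?_
        have h3 : suppF (U sM a) V ≤ V sM := suppF_le_of_le (hU1 _ _) (hUs _ _) hsM
        nlinarith [(hr sM a).2]
      rw [le_div_iff₀ h1β]; nlinarith
    exact ⟨V, heq, hlow, hupp⟩
  -- discount sequence
  set b : ℕ → ℝ := fun k => 1 - ((k:ℝ)+2)⁻¹ with hbdef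
  have hk2 : ∀ k : ℕ, (0:ℝ) < (k:ℝ) + 2 := by
    intro k; have : (0:ℝ) ≤ (k:ℝ) := Nat.cast_nonneg k; linarith
  have hb0 : ∀ k, 0 ≤ b k := by
    intro k
    have h1 : ((k:ℝ)+2)⁻¹ ≤ 1 := by
      rw [inv_le_one_iff₀]; right; linarith [hk2 k]
    simp only [hbdef]; linarith
  have hb1 : ∀ k, b k < 1 := by
    intro k
    have h1 : 0 < ((k:ℝ)+2)⁻¹ := by positivity
    simp only [hbdef]; linarith
  have hbt : Tendsto b atTop (nhds 1) := by
    have h1 : Tendsto (fun k : ℕ => ((k:ℝ)+2)) atTop atTop :=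
      Filter.tendsto_atTop_add_const_right atTop 2 tendsto_natCast_atTop_atTop
    have h2 : Tendsto (fun k : ℕ => ((k:ℝ)+2)⁻¹) atTop (nhds 0) := h1.inv_tendsto_atTop
    have h3 : Tendsto (fun k : ℕ => 1 - ((k:ℝ)+2)⁻¹) atTop (nhds (1 - 0)) :=
      tendsto_const_nhds.sub h2
    simpa using h3
  have hfix' : ∀ k : ℕ, ∃ V : S → ℝ,
      (∀ s, V s = ⨆ a, (r s a + b k * suppF (U s a) V)) ∧
      (∀ s, 0 ≤ V s) ∧ (∀ s, V s ≤ 1 / (1 - b k)) :=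
    fun k => hfix (b k) (hb0 k) (hb1 k)
  choose V hVeq hV0 hV1 using hfix'
  -- span bound
  have hspan : ∀ k s s', V k s - V k s' ≤ C := by
    intro k
    have hgr : ∀ s, ∃ a, V k s = r s a + b k * suppF (U s a) (V k) := by
      intro s
      obtain ⟨a, ha, _⟩ := exists_ciSup_eq (fun a => r s a + b k * suppF (U s a) (V k))
      exact ⟨a, (hVeq k s).trans ha⟩
    choose d hd using hgr
    have hwk : ∀ s a, ∃ p, p ∈ U s a ∧ suppF (U s a) (V k) = ∑ s', p s' * V k s' :=
      fun s a => suppF_exists_min (hU1 s a) (hU2 s a) (V k)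
    choose P hPU hPe using hwk
    set M : Matrix S S ℝ := Matrix.of (fun s s' => P s (d s) s') with hM
    have hMrow : ∀ s, ∃ a, (fun s' => M s s') ∈ U s a := fun s => ⟨d s, hPU s (d s)⟩
    have hMst : IsStoch M := by
      constructor
      · intro s s'; exact ((hUs s (d s)) (hPU s (d s))).1 s'
      · intro s; exact ((hUs s (d s)) (hPU s (d s))).2
    have hhit := hδ M hMrow
    have hveqM : ∀ x, V k x = r x (d x) + b k * (M *ᵥ V k) x := by
      intro x
      rw [hd x, hPe x (d x)]
      rfl
    intro s s'
    exact span_bound hMst hδ0 hδ1 hhit (hb0 k) (hb1 k) (fun x => (hr x (d x)).1)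
      hveqM (hV0 k) (hV1 k) s s'
  -- relative values
  set s0 : S := Classical.arbitrary S with hs0
  set gs : ℕ → ℝ := fun k => (1 - b k) * V k s0 with hgs
  set hs : ℕ → S → ℝ := fun k s => V k s - V k s0 with hhs
  have hgmem : ∀ k, gs k ∈ Set.Icc (0:ℝ) 1 := by
    intro k
    constructor
    · exact mul_nonneg (by linarith [hb1 k]) (hV0 k s0)
    · have h2 := hV1 k s0
      rw [le_div_iff₀ (by linarith [hb1 k])] at h2
      calc (1 - b k) * V k s0 = V k s0 * (1 - b k) := by ring
        _ ≤ 1 := h2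
  have hhmem : ∀ k, hs k ∈ Set.Icc (fun _ : S => -C) (fun _ : S => C) := by
    intro k
    refine Set.mem_Icc.mpr ⟨fun s => ?_, fun s => ?_⟩
    · have := hspan k s0 s; simp only [hhs]; linarith
    · have := hspan k s s0; simp only [hhs]; linarith
  have hmem : ∀ k, (gs k, hs k) ∈
      Set.Icc ((0:ℝ), fun _ : S => -C) (1, fun _ : S => C) := by
    intro k
    rw [Set.mem_Icc]
    exact ⟨⟨(hgmem k).1, (hhmem k).1⟩, ⟨(hgmem k).2, (hhmem k).2⟩⟩
  have hcomp : IsCompact (Set.Icc ((0:ℝ), fun _ : S => -C) (1, fun _ : S => C)) :=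
    isCompact_Icc
  obtain ⟨⟨g, h⟩, _, φ, hφm, hφt⟩ := hcomp.tendsto_subseq hmem
  have hgt : Tendsto (fun k => gs (φ k)) atTop (nhds g) :=
    (continuous_fst.tendsto _).comp hφt
  have hht : Tendsto (fun k => hs (φ k)) atTop (nhds h) :=
    (continuous_snd.tendsto _).comp hφt
  have hbφ : Tendsto (fun k => b (φ k)) atTop (nhds 1) := hbt.comp hφm.tendsto_atTop
  -- relative Bellman equation at discount b k
  have hEk : ∀ k s, hs k s = ⨆ a, (r s a - gs k + b k * suppF (U s a) (hs k)) := by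
    intro k s
    have hVdec : V k = fun s' => hs k s' + V k s0 := by
      funext s'; simp [hhs]
    have hsupp : ∀ a, suppF (U s a) (V k) = suppF (U s a) (hs k) + V k s0 := by
      intro a
      conv_lhs => rw [hVdec]
      exact suppF_add_const (hU1 s a) (hU2 s a) (hUs s a) (hs k) (V k s0)
    have e1 : (fun a => r s a + b k * suppF (U s a) (V k))
        = fun a => (r s a - gs k + b k * suppF (U s a) (hs k)) + V k s0 := by
      funext a; rw [hsupp a]; simp only [hgs]; ring
    have e2 : (⨆ a, (r s a + b k * suppF (U s a) (V k)))
        = (⨆ a, (r s a - gs k + b k * suppF (U s a) (hs k))) + V k s0 := by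
      rw [e1]
      exact ciSup_add_const _ _
    simp only [hhs]
    rw [hVeq k s, e2]
    ring
  have hsuppc : ∀ s a, Continuous (suppF (U s a)) := by
    intro s a
    have hl : LipschitzWith 1 (suppF (U s a)) := LipschitzWith.of_dist_le_mul fun x y => by
      rw [Real.dist_eq, NNReal.coe_one, one_mul]
      exact suppF_dist_le (hU1 s a) (hU2 s a) (hUs s a) fun z => by
        rw [← Real.dist_eq]; exact dist_le_pi_dist x y z
    exact hl.continuous
  refine ⟨g, h, fun s => ?_⟩
  have hFt : ∀ a : A, Tendsto
      (fun k => r s a - gs (φ k) + b (φ k) * suppF (U s a) (hs (φ k)))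
      atTop (nhds (r s a - g + 1 * suppF (U s a) h)) := fun a =>
    (tendsto_const_nhds.sub hgt).add (hbφ.mul (((hsuppc s a).tendsto h).comp hht))
  have hcsup : Continuous (fun v : A → ℝ => ⨆ a, v a) := by
    have h1 := cont_sup' (Finset.univ_nonempty (α := A))
      (g := fun (a : A) (v : A → ℝ) => v a) (fun a => continuous_apply a)
    have e : (fun v : A → ℝ => Finset.univ.sup' Finset.univ_nonempty fun a => v a)
        = fun v : A → ℝ => ⨆ a, v a := by
      funext v; exact Finset.sup'_univ_eq_ciSup _
    rwa [e] at h1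
  have hsup_t : Tendsto
      (fun k => ⨆ a, (r s a - gs (φ k) + b (φ k) * suppF (U s a) (hs (φ k))))
      atTop (nhds (⨆ a, (r s a - g + 1 * suppF (U s a) h))) :=
    (hcsup.tendsto _).comp (tendsto_pi_nhds.mpr hFt)
  have hlhs : Tendsto (fun k => hs (φ k) s) atTop (nhds (h s)) :=
    ((continuous_apply s).tendsto h).comp hht
  have heq2 : (fun k => hs (φ k) s)
      = fun k => ⨆ a, (r s a - gs (φ k) + b (φ k) * suppF (U s a) (hs (φ k))) :=
    funext fun k => hEk (φ k) s
  rw [heq2] at hlhs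
  have hfin := tendsto_nhds_unique hlhs hsup_t
  rw [hfin]
  simp only [one_mul]

end Main

end Stmt1Aux

/-- Under Assumption 1, the optimal robust average-reward Bellman
equation is solvable, and its gain component equals the optimal robust average
reward (the supremum over stationary policies of the robust average reward),
at every state. -/
theorem stmt1 {S A : Type*} [Fintype S] [DecidableEq S] [Nonempty S]
    [Fintype A] [Nonempty A]
    (r : S → A → ℝ) (hr : ∀ s a, r s a ∈ Set.Icc (0 : ℝ) 1)
    (U : S → A → Set (S → ℝ))
    (hU : ∀ s a, (U s a).Nonempty ∧ IsCompact (U s a) ∧ Convex ℝ (U s a) ∧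
      U s a ⊆ stdSimplex ℝ S)
    (hirr : Assump1 U) :
    ∃ (g : ℝ) (h : S → ℝ),
      (∀ s, h s = ⨆ a : A, (r s a - g + suppF (U s a) h)) ∧
      (∀ s, g = sSup {x | ∃ π : S → A → ℝ,
        (∀ s', π s' ∈ stdSimplex ℝ A) ∧ x = robAvgR U π r s}) := by
  classical
  obtain ⟨g, h, hBell⟩ := Stmt1Aux.bellman_exists r hr U hU hirr
  have hU1 : ∀ s a, (U s a).Nonempty := fun s a => (hU s a).1
  have hU2 : ∀ s a, IsCompact (U s a) := fun s a => (hU s a).2.1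
  have hUs' : ∀ s a, U s a ⊆ stdSimplex ℝ S := fun s a => (hU s a).2.2.2
  obtain ⟨sH, hsH⟩ := Finite.exists_max (fun s => |h s|)
  set Hb : ℝ := |h sH| with hHbdef
  have hH : ∀ s, |h s| ≤ Hb := hsH
  have hHb0 : 0 ≤ Hb := abs_nonneg _
  have hwk : ∀ s a, ∃ p, p ∈ U s a ∧ suppF (U s a) h = ∑ s', p s' * h s' :=
    fun s a => Stmt1Aux.suppF_exists_min (hU1 s a) (hU2 s a) h
  choose Pst hPstU hPste using hwk
  have hgr : ∀ s, ∃ a, h s = r s a - g + suppF (U s a) h := by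
    intro s
    obtain ⟨a, ha, _⟩ := Stmt1Aux.exists_ciSup_eq (fun a => r s a - g + suppF (U s a) h)
    exact ⟨a, (hBell s).trans ha⟩
  choose d hd using hgr
  set πd : S → A → ℝ := fun s a => if a = d s then 1 else 0 with hπd
  have hπdmem : ∀ s, πd s ∈ stdSimplex ℝ A := by
    intro s
    constructor
    · intro a; by_cases hc : a = d s <;> simp [hπd, hc]
    · simp [hπd]
  have hpolstoch : ∀ (π : S → A → ℝ), (∀ s', π s' ∈ stdSimplex ℝ A) →
      ∀ (P : S → A → S → ℝ), (∀ s' a, P s' a ∈ U s' a) →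
      Stmt1Aux.IsStoch (polMat π P) := by
    intro π hπ P hP
    constructor
    · intro x y
      exact Finset.sum_nonneg fun a _ =>
        mul_nonneg ((hπ x).1 a) (((hUs' x a) (hP x a)).1 y)
    · intro x
      show ∑ y, ∑ a, π x a * P x a y = 1
      rw [Finset.sum_comm]
      calc ∑ a, ∑ y, π x a * P x a y = ∑ a, π x a * ∑ y, P x a y := by
            simp [Finset.mul_sum]
        _ = ∑ a, π x a := by
            refine Finset.sum_congr rfl fun a _ => ?_
            rw [((hUs' x a) (hP x a)).2, mul_one]
        _ = 1 := (hπ x).2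
  have hrp0 : ∀ (π : S → A → ℝ), (∀ s', π s' ∈ stdSimplex ℝ A) → ∀ x, 0 ≤ polRew π r x :=
    fun π hπ x => Finset.sum_nonneg fun a _ => mul_nonneg ((hπ x).1 a) ((hr x a).1)
  have hrp1 : ∀ (π : S → A → ℝ), (∀ s', π s' ∈ stdSimplex ℝ A) →
      ∀ x, polRew π r x ≤ 1 := by
    intro π hπ x
    calc ∑ a, π x a * r x a ≤ ∑ a, π x a * 1 :=
        Finset.sum_le_sum fun a _ => mul_le_mul_of_nonneg_left (hr x a).2 ((hπ x).1 a)
      _ = 1 := by simp only [mul_one]; exact (hπ x).2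
  -- every policy's robust average reward is at most g
  have hUB : ∀ (π : S → A → ℝ), (∀ s', π s' ∈ stdSimplex ℝ A) → ∀ s : S,
      robAvgR U π r s ≤ g := by
    intro π hπ s
    have hkeyle : ∀ x, polRew π r x + (polMat π Pst *ᵥ h) x ≤ h x + g := by
      intro x
      have hsa : ∀ a, r x a + ∑ s', Pst x a s' * h s' ≤ h x + g := by
        intro a
        have h1 : r x a - g + suppF (U x a) h ≤ h x := by
          rw [hBell x]
          exact Stmt1Aux.le_ciSup' (fun a => r x a - g + suppF (U x a) h) a
        rw [← hPste x a]
        linarith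
      have h2 : ∑ a, π x a * (r x a + ∑ s', Pst x a s' * h s')
          ≤ ∑ a, π x a * (h x + g) :=
        Finset.sum_le_sum fun a _ => mul_le_mul_of_nonneg_left (hsa a) ((hπ x).1 a)
      have e3 : ∑ a, π x a * (h x + g) = h x + g := by
        rw [← Finset.sum_mul, (hπ x).2, one_mul]
      have e4 : ∑ a, π x a * (r x a + ∑ s', Pst x a s' * h s')
          = polRew π r x + (polMat π Pst *ᵥ h) x := by
        have e5 : ∀ a, π x a * (r x a + ∑ s', Pst x a s' * h s')
            = π x a * r x a + ∑ s', π x a * Pst x a s' * h s' := by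
          intro a
          rw [mul_add, Finset.mul_sum]
          congr 1
          exact Finset.sum_congr rfl fun s' _ => by ring
        rw [Finset.sum_congr rfl fun a _ => e5 a, Finset.sum_add_distrib]
        congr 1
        rw [Finset.sum_comm]
        show _ = ∑ s', (∑ a, π x a * Pst x a s') * h s'
        exact Finset.sum_congr rfl fun s' _ => by rw [Finset.sum_mul]
      calc polRew π r x + (polMat π Pst *ᵥ h) x
          = ∑ a, π x a * (r x a + ∑ s', Pst x a s' * h s') := e4.symm
        _ ≤ ∑ a, π x a * (h x + g) := h2
        _ = h x + g := e3
    have hNst := hpolstoch π hπ Pst hPstU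
    have hle := Stmt1Aux.avg_liminf_le hNst (hrp0 π hπ) (hrp1 π hπ) hH hHb0 hkeyle s
    have hmem0 : ∀ x ∈ {x | ∃ P : S → A → S → ℝ,
        (∀ s' a, P s' a ∈ U s' a) ∧ x = avgR π P r s}, (0:ℝ) ≤ x := by
      rintro x ⟨P, hP, rfl⟩
      have hNst' := hpolstoch π hπ P hP
      have hz : ∀ y, (polMat π P *ᵥ (fun _ => (0:ℝ))) y = 0 := by
        intro y; simp [Stmt1Aux.mulVec_apply']
      have h0 := Stmt1Aux.avg_liminf_ge (hh := fun _ => (0:ℝ)) (g := 0) (Hb := 0)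
        hNst' (hrp0 π hπ) (hrp1 π hπ) (fun x => by simp) le_rfl
        (fun x => by rw [hz x]; simpa using hrp0 π hπ x) s
      simpa [avgR] using h0
    have hbdd : BddBelow {x | ∃ P : S → A → S → ℝ,
        (∀ s' a, P s' a ∈ U s' a) ∧ x = avgR π P r s} :=
      ⟨0, fun x hx => hmem0 x hx⟩
    have hmem : avgR π Pst r s ∈ {x | ∃ P : S → A → S → ℝ,
        (∀ s' a, P s' a ∈ U s' a) ∧ x = avgR π P r s} := ⟨Pst, hPstU, rfl⟩
    simp only [robAvgR]
    exact csInf_le_of_le hbdd hmem (by simpa [avgR] using hle)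
  -- the greedy policy achieves g against every kernel
  have hLB : ∀ (P : S → A → S → ℝ), (∀ s' a, P s' a ∈ U s' a) → ∀ s : S,
      g ≤ avgR πd P r s := by
    intro P hP s
    have hNst := hpolstoch πd hπdmem P hP
    have hkeyge : ∀ x, h x + g ≤ polRew πd r x + (polMat πd P *ᵥ h) x := by
      intro x
      have e1 : polRew πd r x = r x (d x) := by
        simp [polRew, hπd, ite_mul]
      have e2 : (polMat πd P *ᵥ h) x = ∑ s', P x (d x) s' * h s' := by
        show ∑ s', (∑ a, πd x a * P x a s') * h s' = _
        refine Finset.sum_congr rfl fun s' _ => ?_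
        congr 1
        simp [hπd, ite_mul]
      have h3 : suppF (U x (d x)) h ≤ ∑ s', P x (d x) s' * h s' :=
        Stmt1Aux.suppF_le_pair (hUs' x (d x)) (hP x (d x)) h
      have h4 := hd x
      rw [e1, e2]
      linarith
    have hge := Stmt1Aux.avg_liminf_ge hNst (hrp0 πd hπdmem) (hrp1 πd hπdmem)
      hH hHb0 hkeyge s
    simpa [avgR] using hge
  have hrobd : ∀ s, robAvgR U πd r s = g := by
    intro s
    refine le_antisymm (hUB πd hπdmem s) ?_
    simp only [robAvgR]
    refine le_csInf ⟨avgR πd Pst r s, Pst, hPstU, rfl⟩ ?_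
    rintro x ⟨P, hP, rfl⟩
    exact hLB P hP s
  refine ⟨g, h, hBell, fun s => ?_⟩
  have hGr : IsGreatest {x | ∃ π : S → A → ℝ,
      (∀ s', π s' ∈ stdSimplex ℝ A) ∧ x = robAvgR U π r s} g := by
    constructor
    · exact ⟨πd, hπdmem, (hrobd s).symm⟩
    · rintro x ⟨π, hπ, rfl⟩
      exact hUB π hπ s
  exact (hGr.csSup_eq).symm
end
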